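/- arXiv:0904.2075 — 8 statements merged into one kernel-verified Lean document; each statement's English description precedes it below -/
import Mathlib

section
/- For any finite set A of elements of F_p, there exists ξ ∈ F_p, ξ ≠ 0, such that |A + ξ·A| ≥ (1/2)·min(|A|², p). -/
open Finset
open scoped Pointwise

theorem stmt_0 (p : ℕ) (hp : p.Prime) (A : Finset (ZMod p)) :
    ∃ ξ : ZMod p, ξ ≠ 0 ∧
      (1 / 2 : ℝ) * min ((A.card : ℝ) ^ 2) (p : ℝ) ≤ ((A + ξ • A).card : ℝ) := by
  classical
  haveI : Fact p.Prime := ⟨hp⟩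
  have hp1 : 1 < p := hp.one_lt
  rcases A.eq_empty_or_nonempty with rfl | hA
  · exact ⟨1, one_ne_zero, by simp⟩
  set n := A.card with hn
  have hn1 : 1 ≤ n := card_pos.2 hA
  have hnp : n ≤ p := by
    have := A.card_le_univ
    simpa [ZMod.card p] using this
  -- the energy set
  set T : ZMod p → Finset ((ZMod p × ZMod p) × (ZMod p × ZMod p)) :=
    fun ξ => ((A ×ˢ A) ×ˢ (A ×ˢ A)).filter
      (fun q => q.1.1 + ξ * q.1.2 = q.2.1 + ξ * q.2.2) with hT
  -- Cauchy–Schwarz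
  have key : ∀ ξ : ZMod p, (n * n) ^ 2 ≤ (A + ξ • A).card * (T ξ).card := by
    intro ξ
    set S := A + ξ • A with hS
    set f : ZMod p × ZMod p → ZMod p := fun q => q.1 + ξ * q.2 with hf
    have hmap : ∀ q ∈ A ×ˢ A, f q ∈ S := by
      intro q hq
      rw [mem_product] at hq
      have : ξ * q.2 ∈ ξ • A := by
        rw [← smul_eq_mul]
        exact smul_mem_smul_finset hq.2
      exact add_mem_add hq.1 this
    set r : ZMod p → ℕ := fun s => ((A ×ˢ A).filter (fun q => f q = s)).card with hr
    have h1 : n * n = ∑ s ∈ S, r s := by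
      have := card_eq_sum_card_fiberwise hmap
      simpa [← hn, card_product] using this
    have hmap2 : ∀ q ∈ T ξ, f q.1 ∈ S := by
      intro q hq
      rw [hT, mem_filter, mem_product] at hq
      exact hmap _ hq.1.1
    have h2 : (T ξ).card = ∑ s ∈ S, r s * r s := by
      rw [card_eq_sum_card_fiberwise hmap2]
      refine Finset.sum_congr rfl (fun s hs => ?_)
      have hfib : (T ξ).filter (fun q => f q.1 = s)
          = ((A ×ˢ A).filter (fun q => f q = s)) ×ˢ ((A ×ˢ A).filter (fun q => f q = s)) := by
        ext q
        simp only [hT, hf, mem_filter, mem_product]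
        constructor
        · rintro ⟨⟨⟨h1', h2'⟩, h3⟩, h4⟩
          exact ⟨⟨h1', h4⟩, ⟨h2', h3 ▸ h4⟩⟩
        · rintro ⟨⟨h1', h4⟩, ⟨h2', h5⟩⟩
          exact ⟨⟨⟨h1', h2'⟩, h4.trans h5.symm⟩, h4⟩
      rw [hfib, card_product]
    have CS : (∑ s ∈ S, r s) ^ 2 ≤ S.card * ∑ s ∈ S, (r s) ^ 2 :=
      sq_sum_le_card_mul_sum_sq
    calc (n * n) ^ 2 = (∑ s ∈ S, r s) ^ 2 := by rw [h1]
      _ ≤ S.card * ∑ s ∈ S, (r s) ^ 2 := CS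
      _ = S.card * (T ξ).card := by rw [h2]; simp [sq]
  -- sum of energies over nonzero ξ
  set E : Finset (ZMod p) := Finset.univ.erase 0 with hE
  have hEcard : E.card = p - 1 := by
    rw [hE, card_erase_of_mem (mem_univ 0)]
    simp [ZMod.card p]
  set Q := (A ×ˢ A) ×ˢ (A ×ˢ A) with hQ
  have swap : ∑ ξ ∈ E, (T ξ).card
      = ∑ q ∈ Q, (E.filter (fun ξ => q.1.1 + ξ * q.1.2 = q.2.1 + ξ * q.2.2)).card := by
    simp_rw [hT, card_filter]
    exact Finset.sum_comm
  have hbound : ∀ q ∈ Q, (E.filter (fun ξ => q.1.1 + ξ * q.1.2 = q.2.1 + ξ * q.2.2)).card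
      ≤ (p - 1) * ((if q.1.1 = q.2.1 then 1 else 0) * (if q.1.2 = q.2.2 then 1 else 0))
        + (if q.1.1 = q.2.1 then 0 else 1) * (if q.1.2 = q.2.2 then 0 else 1) := by
    rintro ⟨⟨a, b⟩, ⟨c, d⟩⟩ _
    dsimp only
    by_cases hac : a = c <;> by_cases hbd : b = d
    · simp only [if_pos hac, if_pos hbd]
      calc (E.filter _).card ≤ E.card := card_filter_le _ _
        _ = p - 1 := hEcard
        _ ≤ (p-1) * (1*1) + 0*0 := by omega
    · have hemp : E.filter (fun ξ => a + ξ * b = c + ξ * d) = ∅ := by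
        refine filter_eq_empty_iff.2 ?_
        intro ξ hξ h
        have hξ0 : ξ ≠ 0 := (mem_erase.1 hξ).1
        rw [hac] at h
        have : ξ * b = ξ * d := by linear_combination h
        exact hbd (mul_left_cancel₀ hξ0 this)
      rw [hemp]
      simp only [if_pos hac, if_neg hbd]
      simp
    · have hemp : E.filter (fun ξ => a + ξ * b = c + ξ * d) = ∅ := by
        refine filter_eq_empty_iff.2 ?_
        intro ξ _ h
        rw [hbd] at h
        exact hac (by linear_combination h)
      rw [hemp]
      simp only [if_neg hac, if_pos hbd]
      simp
    · have h1 : (E.filter (fun ξ => a + ξ * b = c + ξ * d)).card ≤ 1 := by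
        refine card_le_one.2 ?_
        intro x hx y hy
        rw [mem_filter] at hx hy
        have hx' := hx.2; have hy' := hy.2
        have : x * (b - d) = y * (b - d) := by linear_combination hx' - hy'
        exact mul_right_cancel₀ (sub_ne_zero.2 hbd) this
      simp only [if_neg hac, if_neg hbd]
      simpa using h1
  have e1 : ∑ q ∈ Q, (if q.1.1 = q.2.1 then (1:ℕ) else 0) * (if q.1.2 = q.2.2 then 1 else 0)
      = n * n := by
    rw [hQ, Finset.sum_product]
    have hin : ∀ x ∈ A ×ˢ A, ∑ y ∈ A ×ˢ A,
        (if x.1 = y.1 then (1:ℕ) else 0) * (if x.2 = y.2 then 1 else 0) = 1 := by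
      intro x hx
      rw [mem_product] at hx
      rw [Finset.sum_product]
      dsimp only
      rw [← Finset.sum_mul_sum A A (fun c => if x.1 = c then (1:ℕ) else 0) (fun c => if x.2 = c then 1 else 0),
        Finset.sum_ite_eq, Finset.sum_ite_eq, if_pos hx.1, if_pos hx.2]
      exact Nat.one_mul 1
    rw [sum_congr rfl hin, sum_const, card_product, smul_eq_mul, mul_one]
  have hcount : ∀ y : ZMod p, y ∈ A → ∑ c ∈ A, (if y = c then (0:ℕ) else 1) = n - 1 := by
    intro y hy
    have h1 : ∑ c ∈ A, (if y = c then (0:ℕ) else 1)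
        = (A.filter (fun c => ¬ (y = c))).card := by
      rw [card_filter]
      exact sum_congr rfl fun c _ => by by_cases h : y = c <;> simp [h]
    have h2 : A.filter (fun c => ¬ (y = c)) = A.erase y := by
      ext c; simp [mem_erase, and_comm, eq_comm]
    rw [h1, h2, card_erase_of_mem hy, hn]
  have e2 : ∑ q ∈ Q, (if q.1.1 = q.2.1 then (0:ℕ) else 1) * (if q.1.2 = q.2.2 then 0 else 1)
      = (n * n) * ((n-1) * (n-1)) := by
    rw [hQ, Finset.sum_product]
    have hin : ∀ x ∈ A ×ˢ A, ∑ y ∈ A ×ˢ A,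
        (if x.1 = y.1 then (0:ℕ) else 1) * (if x.2 = y.2 then 0 else 1)
        = (n-1) * (n-1) := by
      intro x hx
      rw [mem_product] at hx
      rw [Finset.sum_product]
      dsimp only
      rw [← Finset.sum_mul_sum A A (fun c => if x.1 = c then (0:ℕ) else 1) (fun c => if x.2 = c then 0 else 1), hcount _ hx.1, hcount _ hx.2]
    rw [sum_congr rfl hin, sum_const, card_product, smul_eq_mul]
  have hsum : ∑ ξ ∈ E, (T ξ).card ≤ (p - 1) * (n * n) + (n * n) * ((n-1) * (n-1)) := by
    rw [swap]
    calc ∑ q ∈ Q, (E.filter (fun ξ => q.1.1 + ξ * q.1.2 = q.2.1 + ξ * q.2.2)).card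
        ≤ ∑ q ∈ Q, ((p - 1) * ((if q.1.1 = q.2.1 then 1 else 0) * (if q.1.2 = q.2.2 then 1 else 0))
          + (if q.1.1 = q.2.1 then 0 else 1) * (if q.1.2 = q.2.2 then 0 else 1)) :=
          Finset.sum_le_sum hbound
      _ = (p - 1) * (n * n) + (n * n) * ((n-1) * (n-1)) := by
          rw [Finset.sum_add_distrib, ← Finset.mul_sum, e1, e2]
  -- pick a ξ with minimal energy
  have hEne : E.Nonempty := card_pos.1 (by rw [hEcard]; omega)
  obtain ⟨ξ, hξE, hmin⟩ := E.exists_min_image (fun ξ => (T ξ).card) hEne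
  have havg : (p - 1) * (T ξ).card ≤ (p - 1) * (n * n) + (n * n) * ((n-1) * (n-1)) := by
    have h := Finset.card_nsmul_le_sum E (fun ζ => (T ζ).card) ((T ξ).card)
      (fun x hx => hmin x hx)
    rw [hEcard, smul_eq_mul] at h
    exact h.trans hsum
  set K := (A + ξ • A).card with hK
  set Tc := (T ξ).card with hTc
  have hkey : (n * n) ^ 2 ≤ K * Tc := key ξ
  -- main arithmetic in ℕ
  set M := min (n * n) p with hM
  have claimgen : ∀ N P : ℕ, 1 ≤ N → N ≤ P → 1 < P →
      min (N * N) P * ((P - 1) * (N * N) + (N * N) * ((N-1) * (N-1)))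
        ≤ 2 * (N * N) ^ 2 * (P - 1) := by
    intro N P h1 h2 h3
    obtain ⟨a, rfl⟩ : ∃ a, N = a + 1 := ⟨N - 1, by omega⟩
    obtain ⟨q, rfl⟩ : ∃ q, P = q + 1 := ⟨P - 1, by omega⟩
    simp only [Nat.add_sub_cancel]
    have haq : a ≤ q := by omega
    rcases le_total ((a+1) * (a+1)) (q+1) with h | h
    · rw [min_eq_left h]
      have ha : a * a ≤ q := by nlinarith
      calc (a+1)*(a+1) * ((q * ((a+1)*(a+1))) + ((a+1)*(a+1)) * (a * a))
          = ((a+1)*(a+1))^2 * (q + a*a) := by ring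
        _ ≤ ((a+1)*(a+1))^2 * (q + q) := Nat.mul_le_mul_left _ (by omega)
        _ = 2 * ((a+1)*(a+1))^2 * q := by ring
    · rw [min_eq_right h]
      have h2' : a * a ≤ q * (2*a+1) :=
        le_trans (Nat.mul_le_mul_right a haq) (Nat.mul_le_mul_left q (by omega))
      have hA1 : (q+1)*q ≤ ((a+1)*(a+1))*q := Nat.mul_le_mul_right q h
      have h3' : (q+1) * (q + a*a) ≤ 2 * ((a+1)*(a+1)) * q := by
        calc (q+1) * (q + a*a) = (q+1)*q + q*(a*a) + a*a := by ring
          _ ≤ ((a+1)*(a+1))*q + q*(a*a) + q*(2*a+1) :=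
              Nat.add_le_add (Nat.add_le_add hA1 le_rfl) h2'
          _ = 2 * ((a+1)*(a+1)) * q := by ring
      calc (q+1) * ((q * ((a+1)*(a+1))) + ((a+1)*(a+1)) * (a * a))
          = ((a+1)*(a+1)) * ((q+1) * (q + a*a)) := by ring
        _ ≤ ((a+1)*(a+1)) * (2 * ((a+1)*(a+1)) * q) := Nat.mul_le_mul_left _ h3'
        _ = 2 * ((a+1)*(a+1))^2 * q := by ring
  have claim : M * ((p - 1) * (n * n) + (n * n) * ((n-1) * (n-1)))
      ≤ 2 * (n * n) ^ 2 * (p - 1) := by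
    have := claimgen n p hn1 hnp hp1
    rw [← hM] at this
    exact this
  have hTc1 : 0 < Tc := by
    rcases Nat.eq_zero_or_pos Tc with h | h
    · exfalso
      have h0 : (n * n) ^ 2 = 0 := Nat.le_zero.1 (by simpa [h] using hkey)
      have h1 : n * n = 0 := (pow_eq_zero_iff two_ne_zero).1 h0
      rcases Nat.mul_eq_zero.1 h1 with h2 | h2 <;> omega
    · exact h
  have hfinal : M * (Tc * (p - 1)) ≤ (2 * K) * (Tc * (p - 1)) := by
    calc M * (Tc * (p - 1)) = M * ((p - 1) * Tc) := by ring
      _ ≤ M * ((p - 1) * (n * n) + (n * n) * ((n-1) * (n-1))) :=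
          Nat.mul_le_mul_left _ havg
      _ ≤ 2 * (n * n) ^ 2 * (p - 1) := claim
      _ ≤ 2 * (K * Tc) * (p - 1) :=
          Nat.mul_le_mul_right _ (Nat.mul_le_mul_left _ hkey)
      _ = (2 * K) * (Tc * (p - 1)) := by ring
  have hMK : M ≤ 2 * K :=
    Nat.le_of_mul_le_mul_right hfinal (Nat.mul_pos hTc1 (by omega))
  refine ⟨ξ, (mem_erase.1 hξE).1, ?_⟩
  have hcast : (M : ℝ) ≤ 2 * (K : ℝ) := by exact_mod_cast hMK
  have hMcast : (M : ℝ) = min ((n : ℝ)^2) (p : ℝ) := by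
    rw [hM, Nat.cast_min]
    push_cast
    rw [sq]
  rw [← hMcast]
  linarith
end

section
/- For any nonempty set A ⊆ F_p, the set 3A² − 3A² (sums of three products of pairs of elements of A minus three such products) has cardinality at least (1/2)·min(|A|², p). -/
open Finset
open scoped Pointwise Combinatorics.Additive

section Helpers

variable {F : Type*} [Field F] [DecidableEq F]

lemma my_smul_add_finset (l : F) (s t : Finset F) : l • (s + t) = l • s + l • t := by
  ext x
  simp only [Finset.mem_smul_finset, Finset.mem_add, smul_eq_mul]
  constructor
  · rintro ⟨y, ⟨a, ha, b, hb, rfl⟩, rfl⟩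
    exact ⟨l * a, ⟨a, ha, rfl⟩, l * b, ⟨b, hb, rfl⟩, by ring⟩
  · rintro ⟨u, ⟨a, ha, rfl⟩, v, ⟨b, hb, rfl⟩, rfl⟩
    exact ⟨a + b, ⟨a, ha, b, hb, rfl⟩, by ring⟩

lemma my_card_smul (l : F) (hl : l ≠ 0) (s : Finset F) : (l • s).card = s.card := by
  rw [Finset.smul_finset_def]
  exact Finset.card_image_of_injective s (MulAction.injective₀ hl)

lemma sub3_subset (A : Finset F) {a b c d e f : F} (ha : a ∈ A) (hb : b ∈ A)
    (hc : c ∈ A) (hd : d ∈ A) (he : e ∈ A) (hf : f ∈ A) :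
    (a - b) • A + (c - d) • A + (e - f) • A ⊆ (A*A + A*A + A*A) - (A*A + A*A + A*A) := by
  intro x hx
  rw [Finset.mem_add] at hx
  obtain ⟨y, hy, z3, hz3, rfl⟩ := hx
  rw [Finset.mem_add] at hy
  obtain ⟨z1, hz1, z2, hz2, rfl⟩ := hy
  rw [Finset.mem_smul_finset] at hz1 hz2 hz3
  obtain ⟨x1, hx1, rfl⟩ := hz1
  obtain ⟨x2, hx2, rfl⟩ := hz2
  obtain ⟨x3, hx3, rfl⟩ := hz3
  rw [Finset.mem_sub]
  refine ⟨a*x1 + c*x2 + e*x3, ?_, b*x1 + d*x2 + f*x3, ?_, by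
    simp only [smul_eq_mul]; ring⟩
  · exact Finset.add_mem_add (Finset.add_mem_add (Finset.mul_mem_mul ha hx1)
      (Finset.mul_mem_mul hc hx2)) (Finset.mul_mem_mul he hx3)
  · exact Finset.add_mem_add (Finset.add_mem_add (Finset.mul_mem_mul hb hx1)
      (Finset.mul_mem_mul hd hx2)) (Finset.mul_mem_mul hf hx3)

end Helpers

set_option maxHeartbeats 1000000 in
theorem stmt_1 (p : ℕ) (hp : p.Prime) (A : Finset (ZMod p)) (hA : A.Nonempty) :
    (1 / 2 : ℝ) * min ((A.card : ℝ) ^ 2) (p : ℝ) ≤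
      (((A * A + A * A + A * A) - (A * A + A * A + A * A)).card : ℝ) := by
  classical
  haveI : Fact p.Prime := ⟨hp⟩
  set T : Finset (ZMod p) := (A * A + A * A + A * A) - (A * A + A * A + A * A) with hTdef
  have hAA : (A * A + A * A + A * A).Nonempty := ((hA.mul hA).add (hA.mul hA)).add (hA.mul hA)
  have hTne : T.Nonempty := by rw [hTdef]; exact hAA.sub hAA
  set N := A.card with hNdef
  have hN1 : 1 ≤ N := by rw [hNdef]; exact hA.card_pos
  have hNp : N ≤ p := by
    rw [hNdef]
    have := Finset.card_le_card (Finset.subset_univ A)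
    simpa [Finset.card_univ, ZMod.card] using this
  have hp2 : 2 ≤ p := hp.two_le
  have hmin0 : (0:ℝ) ≤ min ((N:ℝ)^2) (p:ℝ) := le_min (by positivity) (by positivity)
  clear_value T N
  by_cases hN2 : 2 ≤ N
  swap
  · -- N = 1
    have hNe : N = 1 := by omega
    have h1 : (1:ℝ) ≤ (T.card : ℝ) := by exact_mod_cast hTne.card_pos
    have h2 : min ((N:ℝ)^2) (p:ℝ) ≤ 1 := by
      rw [hNe]; exact (min_le_left _ _).trans (by norm_num)
    linarith
  -- now N ≥ 2
  obtain ⟨x₀, hx₀, y₀, hy₀, hxy₀⟩ := Finset.one_lt_card.mp (show 1 < A.card by omega)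
  set S : Set (ZMod p) :=
    {ξ | ∃ a ∈ A, ∃ b ∈ A, ∃ c ∈ A, ∃ d ∈ A, c ≠ d ∧ ξ * (c - d) = a - b} with hSdef
  have hrealize : ∀ u : ZMod p, u ∈ S → (A + u • A).card ≤ T.card := by
    intro u hu
    rw [hSdef] at hu
    obtain ⟨a, ha, b, hb, c, hc, d, hd, hcd, huw⟩ := hu
    have hcd0 : c - d ≠ 0 := sub_ne_zero.2 hcd
    calc (A + u • A).card ≤ (A + u • A + A).card := Finset.card_le_card_add_right hA
      _ = ((c - d) • (A + u • A + A)).card := (my_card_smul _ hcd0 _).symm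
      _ = ((c-d) • A + (a-b) • A + (c-d) • A).card := by
          rw [my_smul_add_finset, my_smul_add_finset, smul_smul,
            show (c - d) * u = a - b from by rw [mul_comm]; exact huw]
      _ ≤ T.card := by
          rw [hTdef]
          exact Finset.card_le_card (sub3_subset A hc hd ha hb hc hd)
  clear_value S
  by_cases hall : ∀ ξ : ZMod p, ξ ∈ S
  · -- CASE 1: averaging
    set P : Finset ((ZMod p × ZMod p) × ZMod p × ZMod p) := (A ×ˢ A) ×ˢ (A ×ˢ A) with hP
    set Qc : ZMod p → ℕ := fun u =>
      (P.filter (fun q => q.1.1 + u * q.1.2 = q.2.1 + u * q.2.2)).card with hQc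
    have hPcard : P.card = N^4 := by
      simp only [hP, Finset.card_product, hNdef]; ring
    set Dg := P.filter (fun q => q.1.1 = q.2.1 ∧ q.1.2 = q.2.2) with hDg
    have hDgcard : Dg.card = N^2 := by
      have himg : Dg = (A ×ˢ A).image (fun r : ZMod p × ZMod p => (r, r)) := by
        ext ⟨⟨a, b⟩, c, d⟩
        simp only [hDg, hP, Finset.mem_filter, Finset.mem_image, Finset.mem_product, Prod.ext_iff]
        constructor
        · rintro ⟨⟨⟨ha, hb⟩, hc, hd⟩, h1, h2⟩
          exact ⟨(a, b), ⟨ha, hb⟩, ⟨rfl, rfl⟩, h1, h2⟩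
        · rintro ⟨⟨x, y⟩, ⟨hx, hy⟩, ⟨h1, h2⟩, h3, h4⟩
          subst h1; subst h2; subst h3; subst h4
          exact ⟨⟨⟨hx, hy⟩, hx, hy⟩, rfl, rfl⟩
      rw [himg, Finset.card_image_of_injective _ (fun r s h => by injection h),
        Finset.card_product, hNdef]
      ring
    have hcardE : ((univ : Finset (ZMod p)).erase 0).card = p - 1 := by
      rw [Finset.card_erase_of_mem (Finset.mem_univ _), Finset.card_univ, ZMod.card]
    have hswap : ∑ u ∈ (univ : Finset (ZMod p)).erase 0, Qc u
        = ∑ q ∈ P, (((univ : Finset (ZMod p)).erase 0).filter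
            (fun u => q.1.1 + u * q.1.2 = q.2.1 + u * q.2.2)).card := by
      simp only [hQc, Finset.card_filter]
      exact Finset.sum_comm
    have hb1 : ∀ q ∈ Dg, (((univ : Finset (ZMod p)).erase 0).filter
        (fun u => q.1.1 + u * q.1.2 = q.2.1 + u * q.2.2)).card ≤ p - 1 := by
      intro q _
      calc (((univ : Finset (ZMod p)).erase 0).filter
          (fun u => q.1.1 + u * q.1.2 = q.2.1 + u * q.2.2)).card
          ≤ ((univ : Finset (ZMod p)).erase 0).card := Finset.card_filter_le _ _
        _ = p - 1 := hcardE
    have hb2 : ∀ q ∈ P, q ∉ Dg → (((univ : Finset (ZMod p)).erase 0).filter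
        (fun u => q.1.1 + u * q.1.2 = q.2.1 + u * q.2.2)).card ≤ 1 := by
      intro q hqP hqD
      rw [Finset.card_le_one]
      intro u hu v hv
      rw [Finset.mem_filter, Finset.mem_erase] at hu hv
      obtain ⟨⟨hu0, -⟩, hueq⟩ := hu
      obtain ⟨⟨hv0, -⟩, hveq⟩ := hv
      by_cases h12 : q.1.2 = q.2.2
      · exfalso
        apply hqD
        rw [hDg, Finset.mem_filter]
        refine ⟨hqP, ?_, h12⟩
        have h5 := hueq
        rw [h12] at h5
        exact add_right_cancel h5
      · have hne : q.2.2 - q.1.2 ≠ 0 := sub_ne_zero.2 (Ne.symm h12)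
        have h1 : u * (q.2.2 - q.1.2) = q.1.1 - q.2.1 := by linear_combination -hueq
        have h2 : v * (q.2.2 - q.1.2) = q.1.1 - q.2.1 := by linear_combination -hveq
        exact mul_right_cancel₀ hne (h1.trans h2.symm)
    have hsum : (∑ u ∈ (univ : Finset (ZMod p)).erase 0, Qc u) + N^2 ≤ N^2 * (p-1) + N^4 := by
      rw [hswap]
      have hsplit := Finset.sum_filter_add_sum_filter_not P
          (fun q => q.1.1 = q.2.1 ∧ q.1.2 = q.2.2)
          (fun q => (((univ : Finset (ZMod p)).erase 0).filter
            (fun u => q.1.1 + u * q.1.2 = q.2.1 + u * q.2.2)).card)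
      rw [← hsplit]
      have hcard_not : (P.filter (fun q => ¬(q.1.1 = q.2.1 ∧ q.1.2 = q.2.2))).card + N^2 = N^4 := by
        have hfc := Finset.card_filter_add_card_filter_not (s := P)
          (p := fun q => q.1.1 = q.2.1 ∧ q.1.2 = q.2.2)
        rw [hPcard] at hfc
        rw [hDg] at hDgcard
        omega
      have h1 : ∑ q ∈ Dg, (((univ : Finset (ZMod p)).erase 0).filter
          (fun u => q.1.1 + u * q.1.2 = q.2.1 + u * q.2.2)).card ≤ N^2 * (p-1) := by
        calc ∑ q ∈ Dg, (((univ : Finset (ZMod p)).erase 0).filter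
            (fun u => q.1.1 + u * q.1.2 = q.2.1 + u * q.2.2)).card
            ≤ ∑ _q ∈ Dg, (p-1) := Finset.sum_le_sum hb1
          _ = N^2 * (p-1) := by rw [Finset.sum_const, hDgcard, smul_eq_mul]
      have h2 : ∑ q ∈ P.filter (fun q => ¬(q.1.1 = q.2.1 ∧ q.1.2 = q.2.2)),
          (((univ : Finset (ZMod p)).erase 0).filter
            (fun u => q.1.1 + u * q.1.2 = q.2.1 + u * q.2.2)).card
          ≤ (P.filter (fun q => ¬(q.1.1 = q.2.1 ∧ q.1.2 = q.2.2))).card := by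
        calc ∑ q ∈ P.filter (fun q => ¬(q.1.1 = q.2.1 ∧ q.1.2 = q.2.2)),
            (((univ : Finset (ZMod p)).erase 0).filter
              (fun u => q.1.1 + u * q.1.2 = q.2.1 + u * q.2.2)).card
            ≤ ∑ _q ∈ P.filter (fun q => ¬(q.1.1 = q.2.1 ∧ q.1.2 = q.2.2)), 1 := by
              refine Finset.sum_le_sum ?_
              intro q hq
              rw [Finset.mem_filter] at hq
              exact hb2 q hq.1 (fun hD => hq.2 ((Finset.mem_filter.mp hD).2))
          _ = (P.filter (fun q => ¬(q.1.1 = q.2.1 ∧ q.1.2 = q.2.2))).card := by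
              rw [Finset.sum_const, smul_eq_mul, mul_one]
      have h3 : Dg = P.filter (fun q => q.1.1 = q.2.1 ∧ q.1.2 = q.2.2) := hDg
      rw [← h3]
      omega
    have hne0 : ((univ : Finset (ZMod p)).erase 0).Nonempty :=
      ⟨1, Finset.mem_erase.mpr ⟨one_ne_zero, Finset.mem_univ _⟩⟩
    obtain ⟨u, humem, hminu⟩ := Finset.exists_min_image _ Qc hne0
    have hu0 : u ≠ 0 := (Finset.mem_erase.mp humem).1
    have havg : (p - 1) * Qc u + N^2 ≤ N^2 * (p-1) + N^4 := by
      have hle : (p-1) * Qc u ≤ ∑ x ∈ (univ : Finset (ZMod p)).erase 0, Qc x := by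
        calc (p-1) * Qc u = ∑ _x ∈ (univ : Finset (ZMod p)).erase 0, Qc u := by
              rw [Finset.sum_const, smul_eq_mul, hcardE]
          _ ≤ ∑ x ∈ (univ : Finset (ZMod p)).erase 0, Qc x :=
              Finset.sum_le_sum (fun x hx => hminu x hx)
      omega
    have hEQ : Finset.addEnergy A (u • A) ≤ Qc u := by
      rw [Finset.addEnergy_eq_card_filter]
      apply Finset.card_le_card_of_injOn
        (fun x : (ZMod p × ZMod p) × ZMod p × ZMod p =>
          ((x.1.1, u⁻¹ * x.1.2), (x.2.1, u⁻¹ * x.2.2)))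
      · rintro ⟨⟨a, b⟩, c, d⟩ hx
        rw [Finset.mem_coe, Finset.mem_filter] at hx
        obtain ⟨hmem, heq⟩ := hx
        rw [Finset.mem_product] at hmem
        obtain ⟨hm1, hm2⟩ := hmem
        rw [Finset.mem_product] at hm1 hm2
        obtain ⟨h11, h12⟩ := hm1
        obtain ⟨h21, h22⟩ := hm2
        rw [Finset.mem_smul_finset] at h12 h22
        obtain ⟨y, hy, hyx⟩ := h12
        obtain ⟨y', hy', hyx'⟩ := h22
        have heq' : a + b = c + d := heq
        refine Finset.mem_filter.mpr ⟨Finset.mem_product.mpr ⟨Finset.mem_product.mpr ⟨h11, ?_⟩,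
          Finset.mem_product.mpr ⟨h21, ?_⟩⟩, ?_⟩
        · show u⁻¹ * b ∈ A
          have hyxb : u • y = b := hyx
          rw [← hyxb, smul_eq_mul, inv_mul_cancel_left₀ hu0]; exact hy
        · show u⁻¹ * d ∈ A
          have hyxd : u • y' = d := hyx'
          rw [← hyxd, smul_eq_mul, inv_mul_cancel_left₀ hu0]; exact hy'
        · show a + u * (u⁻¹ * b) = c + u * (u⁻¹ * d)
          rw [mul_inv_cancel_left₀ hu0, mul_inv_cancel_left₀ hu0]
          exact heq'
      · rintro ⟨⟨a, b⟩, c, d⟩ hx ⟨⟨a', b'⟩, c', d'⟩ hy h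
        simp only [Prod.ext_iff] at h
        obtain ⟨⟨h1, h2⟩, h3, h4⟩ := h
        have h2' : b = b' := mul_left_cancel₀ (inv_ne_zero hu0) h2
        have h4' : d = d' := mul_left_cancel₀ (inv_ne_zero hu0) h4
        simp only [Prod.ext_iff]
        exact ⟨⟨h1, h2'⟩, h3, h4'⟩
    have hCS : N^2 * N^2 ≤ (A + u • A).card * Qc u := by
      have h := Finset.le_card_add_mul_addEnergy A (u • A)
      rw [my_card_smul u hu0 A, ← hNdef] at h
      exact h.trans (Nat.mul_le_mul_left _ hEQ)
    have hMT : (A + u • A).card ≤ T.card := hrealize u (hall u)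
    -- generalize to opaque naturals
    set Q : ℕ := Qc u with hQdef
    set M : ℕ := (A + u • A).card with hMdef
    clear_value Q M
    clear hQdef hMdef hEQ hsum hswap hb1 hb2 hDgcard hDg hPcard hQc hminu Qc Dg hP P
    -- pass to reals
    have f1 : ((N:ℝ))^2 * (N:ℝ)^2 ≤ (M : ℝ) * (Q : ℝ) := by exact_mod_cast hCS
    have f2 : ((p:ℝ) - 1) * (Q : ℝ) + (N:ℝ)^2 ≤ (N:ℝ)^2 * ((p:ℝ)-1) + (N:ℝ)^4 := by
      have h := (Nat.cast_le (α := ℝ)).mpr havg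
      push_cast [Nat.cast_sub (show 1 ≤ p by omega)] at h
      linarith
    have f3 : (M : ℝ) ≤ (T.card : ℝ) := Nat.cast_le.mpr hMT
    have fN : (2:ℝ) ≤ (N:ℝ) := by exact_mod_cast hN2
    have fp : (2:ℝ) ≤ (p:ℝ) := by exact_mod_cast hp2
    have fM0 : (0:ℝ) ≤ (M : ℝ) := Nat.cast_nonneg _
    rcases le_total ((N:ℝ)^2) (p:ℝ) with hc | hc
    · rw [min_eq_left hc]
      have hQ2 : (Q : ℝ) ≤ 2 * (N:ℝ)^2 := by
        nlinarith [f2, mul_nonneg (sub_nonneg.2 hc) (sq_nonneg ((N:ℝ))),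
          show (0:ℝ) < (p:ℝ) - 1 by linarith]
      have hNM : (N:ℝ)^2 ≤ 2 * (M : ℝ) := by
        nlinarith [f1, mul_le_mul_of_nonneg_left hQ2 fM0,
          show (0:ℝ) < (N:ℝ)^2 by positivity]
      linarith
    · rw [min_eq_right hc]
      have hpQ : (p:ℝ) * (Q : ℝ) ≤ 2 * (N:ℝ)^4 := by
        have e2 : (p:ℝ) * (((p:ℝ)-1) * (Q : ℝ)) ≤
            (p:ℝ) * ((N:ℝ)^2*((p:ℝ)-1) + (N:ℝ)^4 - (N:ℝ)^2) :=
          mul_le_mul_of_nonneg_left (by linarith) (by positivity)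
        have e3 : (p:ℝ) * ((N:ℝ)^2*((p:ℝ)-1) + (N:ℝ)^4 - (N:ℝ)^2) ≤ 2*(N:ℝ)^4*((p:ℝ)-1) := by
          nlinarith [mul_nonneg (mul_nonneg (sub_nonneg.2 fp) (sub_nonneg.2 hc)) (sq_nonneg (N:ℝ))]
        have e4 : ((p:ℝ)-1) * ((p:ℝ)*(Q : ℝ)) ≤ ((p:ℝ)-1) * (2*(N:ℝ)^4) := by nlinarith [e2, e3]
        exact le_of_mul_le_mul_left e4 (by linarith)
      have g1 : (p:ℝ)*((N:ℝ)^2*(N:ℝ)^2) ≤ (p:ℝ)*((M:ℝ)*(Q:ℝ)) :=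
        mul_le_mul_of_nonneg_left f1 (by positivity)
      have g2 : (M:ℝ)*((p:ℝ)*(Q:ℝ)) ≤ (M:ℝ)*(2*(N:ℝ)^4) :=
        mul_le_mul_of_nonneg_left hpQ fM0
      have g3 : (p:ℝ)*(N:ℝ)^4 ≤ (2*(M:ℝ))*(N:ℝ)^4 := by nlinarith [g1, g2]
      have hpM : (p:ℝ) ≤ 2*(M : ℝ) :=
        le_of_mul_le_mul_right g3 (by positivity)
      linarith
  · -- CASE 2
    push_neg at hall
    obtain ⟨z, hz⟩ := hall
    have h1S : (1 : ZMod p) ∈ S := by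
      rw [hSdef]
      exact ⟨x₀, hx₀, y₀, hy₀, x₀, hx₀, y₀, hy₀, hxy₀, by ring⟩
    have hex : ∃ k : ℕ, (1 + (k : ZMod p)) ∉ S := by
      refine ⟨(z - 1).val, ?_⟩
      have h3 : (1 : ZMod p) + ((z - 1).val : ZMod p) = z := by
        rw [ZMod.natCast_val, ZMod.cast_id]; ring
      rwa [h3]
    have hkS : (1 + ((Nat.find hex : ℕ) : ZMod p)) ∉ S := Nat.find_spec hex
    set k := Nat.find hex with hkdef
    have hk0 : k ≠ 0 := by
      intro h
      apply hkS
      rw [h]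
      simpa using h1S
    set ξ : ZMod p := 1 + (k : ZMod p) with hξ
    have hξS : ξ ∉ S := hkS
    have hξ1S : ξ - 1 ∈ S := by
      have hlt : k - 1 < k := Nat.sub_lt (Nat.pos_of_ne_zero hk0) one_pos
      have h2 : (1 + ((k-1 : ℕ) : ZMod p)) ∈ S := not_not.mp (Nat.find_min hex hlt)
      have h3 : ξ - 1 = 1 + ((k-1:ℕ) : ZMod p) := by
        have h4 : ((k : ℕ) : ZMod p) = ((k-1:ℕ) : ZMod p) + 1 := by
          have h5 : k - 1 + 1 = k := by omega
          rw [← h5]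
          push_cast
          ring
        rw [hξ, h4]; ring
      rwa [h3]
    have hinj : Set.InjOn (fun q : ZMod p × ZMod p => q.1 + ξ * q.2) ↑(A ×ˢ A) := by
      rintro ⟨x, y⟩ hxy ⟨x', y'⟩ hxy' h
      simp only [Finset.coe_product, Set.mem_prod, Finset.mem_coe] at hxy hxy'
      simp only at h
      by_cases hyy : y = y'
      · subst hyy
        have hx : x = x' := by linear_combination h
        rw [hx]
      · exact absurd (by
          rw [hSdef]
          exact ⟨x, hxy.1, x', hxy'.1, y', hxy'.2, y, hxy.2, Ne.symm hyy,
            by linear_combination -h⟩) hξS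
    have himg : (A ×ˢ A).image (fun q : ZMod p × ZMod p => q.1 + ξ * q.2) ⊆ A + ξ • A := by
      intro w hw
      obtain ⟨⟨x, y⟩, hq, rfl⟩ := Finset.mem_image.mp hw
      obtain ⟨hx, hy⟩ := Finset.mem_product.mp hq
      exact Finset.add_mem_add hx (by
        rw [show ξ * y = ξ • y from rfl]
        exact Finset.smul_mem_smul_finset hy)
    have hN2card : N ^ 2 ≤ (A + ξ • A).card := by
      calc N ^ 2 = (A ×ˢ A).card := by rw [Finset.card_product, hNdef]; ring
        _ = ((A ×ˢ A).image (fun q : ZMod p × ZMod p => q.1 + ξ * q.2)).card :=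
            (Finset.card_image_of_injOn hinj).symm
        _ ≤ _ := Finset.card_le_card himg
    have hsub2 : A + ξ • A ⊆ A + (ξ - 1) • A + A := by
      intro w hw
      rw [Finset.mem_add] at hw
      obtain ⟨x, hx, z', hz', rfl⟩ := hw
      rw [Finset.mem_smul_finset] at hz'
      obtain ⟨y, hy, rfl⟩ := hz'
      rw [Finset.mem_add]
      refine ⟨x + (ξ - 1) * y, ?_, y, hy, by rw [smul_eq_mul]; ring⟩
      exact Finset.add_mem_add hx (by
        rw [show (ξ - 1) * y = (ξ - 1) • y from rfl]
        exact Finset.smul_mem_smul_finset hy)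
    rw [hSdef] at hξ1S
    obtain ⟨a, ha, b, hb, c, hc, d, hd, hcd, huw⟩ := hξ1S
    have hcd0 : c - d ≠ 0 := sub_ne_zero.2 hcd
    have hfinal : N ^ 2 ≤ T.card := by
      calc N^2 ≤ (A + ξ • A).card := hN2card
        _ ≤ (A + (ξ - 1) • A + A).card := Finset.card_le_card hsub2
        _ = ((c - d) • (A + (ξ - 1) • A + A)).card := (my_card_smul _ hcd0 _).symm
        _ = ((c-d) • A + (a-b) • A + (c-d) • A).card := by
            rw [my_smul_add_finset, my_smul_add_finset, smul_smul,
              show (c-d)*(ξ-1) = a - b from by rw [mul_comm]; exact huw]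
        _ ≤ T.card := by
            rw [hTdef]
            exact Finset.card_le_card (sub3_subset A hc hd ha hb hc hd)
    have hfinal' : ((N:ℝ))^2 ≤ (T.card : ℝ) := by exact_mod_cast hfinal
    have := min_le_left ((N:ℝ)^2) (p:ℝ)
    linarith
end

section
/- For every δ with 0 < δ < 1 there is an integer k = k(δ) such that: for every prime p and every set A ⊆ F_p with |A| ≥ p^δ, one has kA^k − kA^k = F_p (every element of F_p is a sum of k products of k elements of A minus another such sum). -/
open Finset
open scoped Pointwise

/-- The `k`-fold iterated sumset `A + A + ⋯ + A` (`k` copies). -/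
def ksum {G : Type*} [AddCommMonoid G] [DecidableEq G] : ℕ → Finset G → Finset G
  | 0, _ => {0}
  | n + 1, A => A + ksum n A

section KSum

variable {G : Type*} [AddCommMonoid G] [DecidableEq G] {A B : Finset G}

lemma ksum_zero (A : Finset G) : ksum 0 A = {0} := rfl

lemma ksum_succ (n : ℕ) (A : Finset G) : ksum (n+1) A = A + ksum n A := rfl

lemma ksum_one (A : Finset G) : ksum 1 A = A := by
  rw [ksum_succ, ksum_zero, show ({0} : Finset G) = (0 : Finset G) from rfl, add_zero]

lemma ksum_mono (h : A ⊆ B) : ∀ n, ksum n A ⊆ ksum n B := by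
  intro n
  induction n with
  | zero => simp [ksum_zero]
  | succ n ih => simpa [ksum_succ] using Finset.add_subset_add h ih

lemma ksum_nonempty (hA : A.Nonempty) (n : ℕ) : (ksum n A).Nonempty := by
  induction n with
  | zero => simp [ksum_zero]
  | succ n ih => simpa [ksum_succ] using hA.add ih

lemma ksum_add_ksum (m n : ℕ) (A : Finset G) :
    ksum m A + ksum n A = ksum (m + n) A := by
  induction m with
  | zero =>
      rw [ksum_zero, show ({0} : Finset G) = (0 : Finset G) from rfl, zero_add, Nat.zero_add]
  | succ m ih =>
      rw [ksum_succ, show m + 1 + n = (m + n) + 1 by omega, ksum_succ, add_assoc, ih]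

lemma add_mem_ksum {x y : G} {m n : ℕ} (hx : x ∈ ksum m A) (hy : y ∈ ksum n A) :
    x + y ∈ ksum (m + n) A := by
  rw [← ksum_add_ksum]; exact Finset.add_mem_add hx hy

lemma nsmul_mem_ksum {x : G} (hx : x ∈ A) (n : ℕ) : n • x ∈ ksum n A := by
  induction n with
  | zero => simp [ksum_zero]
  | succ n ih =>
      rw [succ_nsmul']
      rw [show n + 1 = 1 + n by omega]
      exact add_mem_ksum (m := 1) (by rw [ksum_one]; exact hx) ih

end KSum

section KSumRing

variable {R : Type*} [CommRing R] [DecidableEq R] {A B : Finset R}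

lemma mul_mem_ksum_right {x c : R} {n : ℕ} (hx : x ∈ ksum n A) (hc : c ∈ B) :
    x * c ∈ ksum n (A * B) := by
  induction n generalizing x with
  | zero =>
      simp only [ksum_zero, Finset.mem_singleton] at hx ⊢
      simp [hx]
  | succ n ih =>
      rw [ksum_succ] at hx
      obtain ⟨a, ha, y, hy, rfl⟩ := Finset.mem_add.1 hx
      rw [add_mul, show n + 1 = 1 + n by omega]
      exact add_mem_ksum (m := 1)
        (by rw [ksum_one]; exact Finset.mul_mem_mul ha hc) (ih hy)

lemma ksum_mul_ksum_subset (m n : ℕ) (A B : Finset R) :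
    ksum m A * ksum n B ⊆ ksum (m * n) (A * B) := by
  induction m with
  | zero =>
      simp only [ksum_zero, Nat.zero_mul]
      intro z hz
      obtain ⟨a, ha, b, hb, rfl⟩ := Finset.mem_mul.1 hz
      simp only [Finset.mem_singleton] at ha
      simp [ha]
  | succ m ih =>
      rw [ksum_succ]
      refine subset_trans (Finset.add_mul_subset _ _ _) ?_
      intro z hz
      obtain ⟨u, hu, v, hv, rfl⟩ := Finset.mem_add.1 hz
      have hu' : u ∈ ksum n (A * B) := by
        obtain ⟨a, ha, b, hb, rfl⟩ := Finset.mem_mul.1 hu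
        have := mul_mem_ksum_right (A := B) (B := A) (n := n) hb ha
        rwa [mul_comm B A, mul_comm b a] at this
      have hv' : v ∈ ksum (m * n) (A * B) := ih hv
      have := add_mem_ksum hu' hv'
      rwa [show n + m * n = (m+1) * n by ring] at this

end KSumRing

section ClassSet

variable {R : Type*} [CommRing R] [DecidableEq R]

/-- The "class set": `n`-fold sums of `d`-fold products of `A`, minus same. -/
def cS (A : Finset R) (n d : ℕ) : Finset R := ksum n (A ^ d) - ksum n (A ^ d)

variable {A : Finset R}

lemma sub_mem_cS {s t : R} {n d : ℕ} (hs : s ∈ ksum n (A ^ d)) (ht : t ∈ ksum n (A ^ d)) :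
    s - t ∈ cS A n d := Finset.sub_mem_sub hs ht

lemma mem_cS_iff {x : R} {n d : ℕ} :
    x ∈ cS A n d ↔ ∃ s ∈ ksum n (A ^ d), ∃ t ∈ ksum n (A ^ d), x = s - t := by
  unfold cS
  rw [Finset.mem_sub]
  constructor
  · rintro ⟨s, hs, t, ht, h⟩; exact ⟨s, hs, t, ht, h.symm⟩
  · rintro ⟨s, hs, t, ht, h⟩; exact ⟨s, hs, t, ht, h.symm⟩

lemma neg_mem_cS {x : R} {n d : ℕ} (hx : x ∈ cS A n d) : -x ∈ cS A n d := by
  obtain ⟨s, hs, t, ht, rfl⟩ := mem_cS_iff.1 hx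
  have : -(s - t) = t - s := by ring
  rw [this]; exact sub_mem_cS ht hs

lemma add_mem_cS {x y : R} {n₁ n₂ d : ℕ} (hx : x ∈ cS A n₁ d) (hy : y ∈ cS A n₂ d) :
    x + y ∈ cS A (n₁ + n₂) d := by
  obtain ⟨s, hs, t, ht, rfl⟩ := mem_cS_iff.1 hx
  obtain ⟨u, hu, v, hv, rfl⟩ := mem_cS_iff.1 hy
  have : s - t + (u - v) = (s + u) - (t + v) := by ring
  rw [this]
  exact sub_mem_cS (add_mem_ksum hs hu) (add_mem_ksum ht hv)

lemma mul_mem_cS {x y : R} {n₁ n₂ d₁ d₂ : ℕ} (hx : x ∈ cS A n₁ d₁) (hy : y ∈ cS A n₂ d₂) :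
    x * y ∈ cS A (2 * (n₁ * n₂)) (d₁ + d₂) := by
  obtain ⟨s, hs, t, ht, rfl⟩ := mem_cS_iff.1 hx
  obtain ⟨u, hu, v, hv, rfl⟩ := mem_cS_iff.1 hy
  have key : ∀ a b : R, a ∈ ksum n₁ (A ^ d₁) → b ∈ ksum n₂ (A ^ d₂) →
      a * b ∈ ksum (n₁ * n₂) (A ^ (d₁ + d₂)) := by
    intro a b ha hb
    have := ksum_mul_ksum_subset n₁ n₂ (A ^ d₁) (A ^ d₂) (Finset.mul_mem_mul ha hb)
    rwa [← pow_add] at this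
  have expand : (s - t) * (u - v) = (s * u + t * v) - (s * v + t * u) := by ring
  rw [expand]
  have h1 : s * u + t * v ∈ ksum (2 * (n₁ * n₂)) (A ^ (d₁ + d₂)) := by
    have := add_mem_ksum (key s u hs hu) (key t v ht hv)
    rwa [show n₁ * n₂ + n₁ * n₂ = 2 * (n₁ * n₂) by ring] at this
  have h2 : s * v + t * u ∈ ksum (2 * (n₁ * n₂)) (A ^ (d₁ + d₂)) := by
    have := add_mem_ksum (key s v hs hv) (key t u ht hu)
    rwa [show n₁ * n₂ + n₁ * n₂ = 2 * (n₁ * n₂) by ring] at this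
  exact sub_mem_cS h1 h2

lemma ksum_cS_subset (m n d : ℕ) : ksum m (cS A n d) ⊆ cS A (m * n) d := by
  induction m with
  | zero =>
      intro x hx
      simp only [ksum_zero, Finset.mem_singleton] at hx
      subst hx
      have h0 : (0 : R) ∈ ksum 0 (A ^ d) := by simp [ksum_zero]
      have := sub_mem_cS h0 h0
      simpa using this
  | succ m ih =>
      intro x hx
      rw [ksum_succ] at hx
      obtain ⟨u, hu, v, hv, rfl⟩ := Finset.mem_add.1 hx
      have := add_mem_cS hu (ih hv)
      rwa [show n + m * n = (m + 1) * n by ring] at this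

lemma cS_scale {x : R} {n d : ℕ} (hx : x ∈ cS A n d) {a : R} (ha : a ∈ A) (e : ℕ) :
    x * a ^ e ∈ cS A n (d + e) := by
  obtain ⟨s, hs, t, ht, rfl⟩ := mem_cS_iff.1 hx
  have key : ∀ b : R, b ∈ ksum n (A ^ d) → b * a ^ e ∈ ksum n (A ^ (d + e)) := by
    intro b hb
    have := mul_mem_ksum_right (B := A ^ e) hb (Finset.pow_mem_pow ha)
    rwa [← pow_add] at this
  have : (s - t) * a ^ e = s * a ^ e - t * a ^ e := by ring
  rw [this]
  exact sub_mem_cS (key s hs) (key t ht)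

lemma cS_pad {x : R} {n d k : ℕ} (hx : x ∈ cS A n d) {a : R} (ha : a ∈ A)
    (hn : n ≤ k) (hd : d ≤ k) : x * a ^ (k - d) ∈ cS A k k := by
  have h1 : x * a ^ (k - d) ∈ cS A n k := by
    have := cS_scale hx ha (k - d)
    rwa [show d + (k - d) = k by omega] at this
  obtain ⟨s, hs, t, ht, heq⟩ := mem_cS_iff.1 h1
  have hw : (k - n) • (a ^ k) ∈ ksum (k - n) (A ^ k) :=
    nsmul_mem_ksum (Finset.pow_mem_pow ha) _
  have : x * a ^ (k - d) = (s + (k - n) • a ^ k) - (t + (k - n) • a ^ k) := by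
    rw [heq]; ring
  rw [this]
  have hs' := add_mem_ksum hs hw
  have ht' := add_mem_ksum ht hw
  rw [show n + (k - n) = k by omega] at hs' ht'
  exact sub_mem_cS hs' ht'

end ClassSet

section Counting

variable {α β : Type*} [DecidableEq α] [DecidableEq β]

/-- A finset is at most its image plus the number of (ordered) collision pairs. -/
lemma card_le_image_add_coll (s : Finset α) (f : α → β) :
    s.card ≤ (s.image f).card +
      ((s ×ˢ s).filter (fun q => q.1 ≠ q.2 ∧ f q.1 = f q.2)).card := by
  classical
  set T := s.image f with hT
  set C := (s ×ˢ s).filter (fun q => q.1 ≠ q.2 ∧ f q.1 = f q.2) with hC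
  have hmap : ∀ x ∈ s, f x ∈ T := fun x hx => Finset.mem_image_of_mem f hx
  rw [Finset.card_eq_sum_card_fiberwise hmap]
  have hmapC : ∀ q ∈ C, f q.1 ∈ T := by
    intro q hq
    rw [hC, Finset.mem_filter, Finset.mem_product] at hq
    exact Finset.mem_image_of_mem f hq.1.1
  have hCsum : C.card = ∑ v ∈ T, (C.filter (fun q => f q.1 = v)).card :=
    Finset.card_eq_sum_card_fiberwise hmapC
  rw [hCsum]
  have : ∀ v ∈ T, (s.filter (fun x => f x = v)).card ≤
      1 + (C.filter (fun q => f q.1 = v)).card := by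
    intro v hv
    obtain ⟨a₀, ha₀⟩ : (s.filter (fun x => f x = v)).Nonempty := by
      obtain ⟨x, hx, rfl⟩ := Finset.mem_image.1 hv
      exact ⟨x, Finset.mem_filter.2 ⟨hx, rfl⟩⟩
    have ha₀s : a₀ ∈ s := (Finset.mem_filter.1 ha₀).1
    have ha₀v : f a₀ = v := (Finset.mem_filter.1 ha₀).2
    -- map the fiber minus a₀ into collision pairs
    have hinj : ∀ x ∈ (s.filter (fun x => f x = v)).erase a₀,
        (x, a₀) ∈ C.filter (fun q => f q.1 = v) := by
      intro x hx
      obtain ⟨hne, hxf⟩ := Finset.mem_erase.1 hx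
      obtain ⟨hxs, hxv⟩ := Finset.mem_filter.1 hxf
      refine Finset.mem_filter.2 ⟨?_, hxv⟩
      refine Finset.mem_filter.2 ⟨Finset.mem_product.2 ⟨hxs, ha₀s⟩, ?_, ?_⟩
      · simpa using hne
      · simp [hxv, ha₀v]
    have hle : ((s.filter (fun x => f x = v)).erase a₀).card ≤
        (C.filter (fun q => f q.1 = v)).card := by
      apply Finset.card_le_card_of_injOn (fun x => (x, a₀)) hinj
      intro x _ y _ h
      exact (Prod.mk.injEq _ _ _ _ ▸ h).1
    have := Finset.card_erase_of_mem ha₀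
    omega
  calc ∑ v ∈ T, (s.filter (fun x => f x = v)).card
      ≤ ∑ v ∈ T, (1 + (C.filter (fun q => f q.1 = v)).card) := Finset.sum_le_sum this
    _ = T.card + ∑ v ∈ T, (C.filter (fun q => f q.1 = v)).card := by
        rw [Finset.sum_add_distrib, Finset.sum_const, smul_eq_mul, mul_one]

end Counting

section Pivot

variable {p : ℕ} [Fact p.Prime]

/-- Total collision count over all dilates `ζ` is at most `(|X||Y|)²`. -/
lemma sum_coll_le (X Y : Finset (ZMod p)) :
    ∑ ζ : ZMod p, (((X ×ˢ Y) ×ˢ (X ×ˢ Y)).filter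
        (fun q => q.1 ≠ q.2 ∧ q.1.1 + ζ * q.1.2 = q.2.1 + ζ * q.2.2)).card
      ≤ (X.card * Y.card) ^ 2 := by
  classical
  have swap : ∀ ζ : ZMod p, (((X ×ˢ Y) ×ˢ (X ×ˢ Y)).filter
        (fun q => q.1 ≠ q.2 ∧ q.1.1 + ζ * q.1.2 = q.2.1 + ζ * q.2.2)).card
      = ∑ q ∈ (X ×ˢ Y) ×ˢ (X ×ˢ Y),
          (if q.1 ≠ q.2 ∧ q.1.1 + ζ * q.1.2 = q.2.1 + ζ * q.2.2 then 1 else 0) := by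
    intro ζ; rw [Finset.card_filter]
  simp only [swap]
  rw [Finset.sum_comm]
  have inner : ∀ q ∈ (X ×ˢ Y) ×ˢ (X ×ˢ Y),
      (∑ ζ : ZMod p, if q.1 ≠ q.2 ∧ q.1.1 + ζ * q.1.2 = q.2.1 + ζ * q.2.2 then 1 else 0) ≤ 1 := by
    intro q _
    rw [← Finset.card_filter]
    by_cases hy : q.1.2 = q.2.2
    · -- same y: no collisions possible (given q.1 ≠ q.2)
      refine le_trans (Nat.le_of_eq ?_) (Nat.zero_le 1)
      rw [Finset.card_eq_zero, Finset.filter_eq_empty_iff]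
      rintro ζ - ⟨hne, heq⟩
      rw [hy] at heq
      have : q.1.1 = q.2.1 := by
        have := add_right_cancel heq
        exact this
      exact hne (Prod.ext this hy)
    · -- distinct y: unique ζ
      apply Finset.card_le_one.2
      rintro ζ hζ ζ' hζ'
      obtain ⟨-, h1⟩ := Finset.mem_filter.1 hζ
      obtain ⟨-, h2⟩ := Finset.mem_filter.1 hζ'
      have hy' : q.1.2 - q.2.2 ≠ 0 := sub_ne_zero.2 hy
      have e1 : ζ * (q.1.2 - q.2.2) = q.2.1 - q.1.1 := by ring_nf; linear_combination h1.2
      have e2 : ζ' * (q.1.2 - q.2.2) = q.2.1 - q.1.1 := by ring_nf; linear_combination h2.2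
      exact mul_right_cancel₀ hy' (e1.trans e2.symm)
  calc ∑ q ∈ (X ×ˢ Y) ×ˢ (X ×ˢ Y), (∑ ζ : ZMod p,
        if q.1 ≠ q.2 ∧ q.1.1 + ζ * q.1.2 = q.2.1 + ζ * q.2.2 then 1 else 0)
      ≤ ∑ _q ∈ (X ×ˢ Y) ×ˢ (X ×ˢ Y), 1 := Finset.sum_le_sum inner
    _ = ((X ×ˢ Y) ×ˢ (X ×ˢ Y)).card := by rw [Finset.sum_const, smul_eq_mul, mul_one]
    _ = (X.card * Y.card) ^ 2 := by
        rw [Finset.card_product, Finset.card_product]; ring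

end Pivot

section PivotMain

variable {p : ℕ} [Fact p.Prime]

/-- The pivot lemma: given class subsets `X, Y`, one can find a dilate-sum whose
cardinality is nearly `|X||Y|`, built from differences of elements of `X` and `Y`. -/
lemma pivot_lemma (X Y : Finset (ZMod p)) (hX : X.Nonempty) (hY : 2 ≤ Y.card)
    (r : ℕ) (hr : (X.card * Y.card) ^ 2 < r * p) :
    ∃ a ∈ X, ∃ b ∈ X, ∃ c ∈ Y, ∃ d ∈ Y, c ≠ d ∧
      X.card * Y.card ≤ (Finset.image
        (fun q : ZMod p × ZMod p => (c - d) * q.1 + ((a - b) + (c - d)) * q.2)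
        (X ×ˢ Y)).card + r := by
  classical
  have hp : p.Prime := Fact.out
  -- the ratio set
  set RR : Finset (ZMod p) :=
    (((X ×ˢ X) ×ˢ (Y ×ˢ Y)).filter (fun t => t.2.1 ≠ t.2.2)).image
      (fun t => (t.1.1 - t.1.2) / (t.2.1 - t.2.2)) with hRR
  have mem_RR : ∀ (a b c d : ZMod p), a ∈ X → b ∈ X → c ∈ Y → d ∈ Y → c ≠ d →
      (a - b) / (c - d) ∈ RR := by
    intro a b c d ha hb hc hd hcd
    rw [hRR]
    exact Finset.mem_image.2 ⟨((a, b), (c, d)),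
      Finset.mem_filter.2 ⟨Finset.mem_product.2 ⟨Finset.mem_product.2 ⟨ha, hb⟩,
        Finset.mem_product.2 ⟨hc, hd⟩⟩, hcd⟩, rfl⟩
  -- key step: find a,b,c,d and ζ with ζ(c-d) = (a-b)+(c-d) and small collision count
  have key : ∃ a ∈ X, ∃ b ∈ X, ∃ c ∈ Y, ∃ d ∈ Y, c ≠ d ∧ ∃ ζ : ZMod p,
      ζ * (c - d) = (a - b) + (c - d) ∧
      (((X ×ˢ Y) ×ˢ (X ×ˢ Y)).filter
        (fun q => q.1 ≠ q.2 ∧ q.1.1 + ζ * q.1.2 = q.2.1 + ζ * q.2.2)).card ≤ r := by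
    by_cases hstuck : RR = Finset.univ
    · -- stuck case: every ζ-1 is a ratio; pick ζ with few collisions
      have hr0 : 0 < r := by
        rcases Nat.eq_zero_or_pos r with h | h
        · subst h; simp at hr
        · exact h
      set bad : Finset (ZMod p) := Finset.univ.filter (fun ζ =>
        r ≤ (((X ×ˢ Y) ×ˢ (X ×ˢ Y)).filter
          (fun q => q.1 ≠ q.2 ∧ q.1.1 + ζ * q.1.2 = q.2.1 + ζ * q.2.2)).card) with hbad
      have hbadcard : bad.card * r ≤ (X.card * Y.card) ^ 2 := by
        calc bad.card * r = ∑ _ζ ∈ bad, r := by rw [Finset.sum_const, smul_eq_mul]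
          _ ≤ ∑ ζ ∈ bad, (((X ×ˢ Y) ×ˢ (X ×ˢ Y)).filter
              (fun q => q.1 ≠ q.2 ∧ q.1.1 + ζ * q.1.2 = q.2.1 + ζ * q.2.2)).card := by
              apply Finset.sum_le_sum
              intro ζ hζ
              exact (Finset.mem_filter.1 hζ).2
          _ ≤ ∑ ζ : ZMod p, (((X ×ˢ Y) ×ˢ (X ×ˢ Y)).filter
              (fun q => q.1 ≠ q.2 ∧ q.1.1 + ζ * q.1.2 = q.2.1 + ζ * q.2.2)).card :=
              Finset.sum_le_sum_of_subset (Finset.subset_univ _)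
          _ ≤ (X.card * Y.card) ^ 2 := sum_coll_le X Y
      have hbadlt : bad.card < p := by
        by_contra hge
        push_neg at hge
        have h2 : p * r ≤ bad.card * r := Nat.mul_le_mul_right r hge
        have h3 : r * p = p * r := mul_comm r p
        omega
      obtain ⟨ζ, hζbad⟩ : ∃ ζ : ZMod p, ζ ∉ bad := by
        by_contra hall
        push_neg at hall
        have : bad = Finset.univ := Finset.eq_univ_iff_forall.2 hall
        rw [this, Finset.card_univ, ZMod.card] at hbadlt
        omega
      have hζcoll : (((X ×ˢ Y) ×ˢ (X ×ˢ Y)).filter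
          (fun q => q.1 ≠ q.2 ∧ q.1.1 + ζ * q.1.2 = q.2.1 + ζ * q.2.2)).card ≤ r := by
        rw [hbad, Finset.mem_filter] at hζbad
        push_neg at hζbad
        exact le_of_lt (hζbad (Finset.mem_univ ζ))
      -- ζ - 1 ∈ RR = univ
      have : ζ - 1 ∈ RR := by rw [hstuck]; exact Finset.mem_univ _
      rw [hRR] at this
      obtain ⟨t, ht, heq⟩ := Finset.mem_image.1 this
      obtain ⟨htmem, htne⟩ := Finset.mem_filter.1 ht
      obtain ⟨h12, h34⟩ := Finset.mem_product.1 htmem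
      obtain ⟨ha, hb⟩ := Finset.mem_product.1 h12
      obtain ⟨hc, hd⟩ := Finset.mem_product.1 h34
      refine ⟨t.1.1, ha, t.1.2, hb, t.2.1, hc, t.2.2, hd, htne, ζ, ?_, hζcoll⟩
      have hcd0 : t.2.1 - t.2.2 ≠ 0 := sub_ne_zero.2 htne
      have : (ζ - 1) * (t.2.1 - t.2.2) = t.1.1 - t.1.2 := by
        rw [← heq, div_mul_cancel₀ _ hcd0]
      linear_combination this
    · -- unstuck case: walk to the boundary of RR
      obtain ⟨c₀, hc₀, d₀, hd₀, hcd₀⟩ := Finset.one_lt_card.1 hY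
      obtain ⟨a₀, ha₀⟩ := hX
      have h0 : (0 : ZMod p) ∈ RR := by
        have := mem_RR a₀ a₀ c₀ d₀ ha₀ ha₀ hc₀ hd₀ hcd₀
        simpa using this
      have hwalk : ∃ ξ ∈ RR, ξ + 1 ∉ RR := by
        by_contra hall
        push_neg at hall
        have hnat : ∀ n : ℕ, (n : ZMod p) ∈ RR := by
          intro n
          induction n with
          | zero => simpa using h0
          | succ n ih => push_cast; exact hall _ ih
        apply hstuck
        apply Finset.eq_univ_iff_forall.2
        intro z
        have := hnat z.val
        rwa [ZMod.natCast_val, ZMod.cast_id] at this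
      obtain ⟨ξ, hξ, hξ1⟩ := hwalk
      rw [hRR] at hξ
      obtain ⟨t, ht, heq⟩ := Finset.mem_image.1 hξ
      obtain ⟨htmem, htne⟩ := Finset.mem_filter.1 ht
      obtain ⟨h12, h34⟩ := Finset.mem_product.1 htmem
      obtain ⟨ha, hb⟩ := Finset.mem_product.1 h12
      obtain ⟨hc, hd⟩ := Finset.mem_product.1 h34
      refine ⟨t.1.1, ha, t.1.2, hb, t.2.1, hc, t.2.2, hd, htne, ξ + 1, ?_, ?_⟩
      · have hcd0 : t.2.1 - t.2.2 ≠ 0 := sub_ne_zero.2 htne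
        have : ξ * (t.2.1 - t.2.2) = t.1.1 - t.1.2 := by
          rw [← heq, div_mul_cancel₀ _ hcd0]
        linear_combination this
      · -- no collisions at all: the filter is empty
        have : (((X ×ˢ Y) ×ˢ (X ×ˢ Y)).filter
            (fun q => q.1 ≠ q.2 ∧ q.1.1 + (ξ+1) * q.1.2 = q.2.1 + (ξ+1) * q.2.2)) = ∅ := by
          rw [Finset.filter_eq_empty_iff]
          rintro q hq ⟨hne, hcol⟩
          rw [Finset.mem_product] at hq
          obtain ⟨hq1, hq2⟩ := hq
          rw [Finset.mem_product] at hq1 hq2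
          by_cases hy : q.1.2 = q.2.2
          · rw [hy] at hcol
            exact hne (Prod.ext (add_right_cancel hcol) hy)
          · have hy0 : q.1.2 - q.2.2 ≠ 0 := sub_ne_zero.2 hy
            have : ξ + 1 = (q.2.1 - q.1.1) / (q.1.2 - q.2.2) := by
              rw [eq_div_iff hy0]
              linear_combination hcol
            exact hξ1 (this ▸ mem_RR _ _ _ _ hq2.1 hq1.1 hq1.2 hq2.2 hy)
        rw [this]
        simp
  -- now convert the ζ-image bound to the final image
  obtain ⟨a, ha, b, hb, c, hc, d, hd, hcd, ζ, hζrel, hζcoll⟩ := key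
  refine ⟨a, ha, b, hb, c, hc, d, hd, hcd, ?_⟩
  have hcd0 : c - d ≠ 0 := sub_ne_zero.2 hcd
  have himg : (Finset.image
      (fun q : ZMod p × ZMod p => (c - d) * q.1 + ((a - b) + (c - d)) * q.2) (X ×ˢ Y))
      = (Finset.image (fun z => (c - d) * z)
          (Finset.image (fun q : ZMod p × ZMod p => q.1 + ζ * q.2) (X ×ˢ Y))) := by
    rw [Finset.image_image]
    apply Finset.image_congr
    intro q _
    simp only [Function.comp]
    rw [← hζrel]
    ring
  have hQle := card_le_image_add_coll (X ×ˢ Y) (fun q : ZMod p × ZMod p => q.1 + ζ * q.2)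
  rw [Finset.card_product] at hQle
  have hcards : (Finset.image (fun z => (c - d) * z)
      (Finset.image (fun q : ZMod p × ZMod p => q.1 + ζ * q.2) (X ×ˢ Y))).card
      = (Finset.image (fun q : ZMod p × ZMod p => q.1 + ζ * q.2) (X ×ˢ Y)).card := by
    apply Finset.card_image_of_injective
    exact mul_right_injective₀ hcd0
  rw [himg, hcards]
  omega

end PivotMain

section Growth

variable {p : ℕ} [Fact p.Prime]

-- Iterated Cauchy-Davenport.
set_option linter.unusedSectionVars false in
lemma ksum_card_ge (hp : p.Prime) {X : Finset (ZMod p)} (hX : X.Nonempty) (m : ℕ) :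
    min p (X.card + m * (X.card - 1)) ≤ (ksum (m + 1) X).card := by
  induction m with
  | zero => simp [ksum_one]
  | succ m ih =>
      have hne : (ksum (m + 1) X).Nonempty := ksum_nonempty hX _
      have hCD := ZMod.cauchy_davenport hp hX hne
      rw [show (m + 1 + 1) = (m + 1) + 1 from rfl, ksum_succ]
      have hz : 1 ≤ X.card := hX.card_pos
      set K := m * (X.card - 1) with hK
      have hK1 : (m + 1) * (X.card - 1) = K + (X.card - 1) := by rw [hK]; ring
      rw [hK1]
      omega

variable {A : Finset (ZMod p)}

/-- The six-fold product-sum membership: elements of the pivot image lie in a class set. -/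
lemma pivot_image_mem {n d : ℕ} {x y a b c d' : ZMod p}
    (hx : x ∈ cS A n d) (hy : y ∈ cS A n d) (ha : a ∈ cS A n d) (hb : b ∈ cS A n d)
    (hc : c ∈ cS A n d) (hd : d' ∈ cS A n d) :
    (c - d') * x + ((a - b) + (c - d')) * y ∈ cS A (12 * n ^ 2) (2 * d) := by
  have hcd : c - d' ∈ cS A (n + n) d := by
    rw [sub_eq_add_neg]; exact add_mem_cS hc (neg_mem_cS hd)
  have hab : (a - b) + (c - d') ∈ cS A ((n + n) + (n + n)) d := by
    refine add_mem_cS ?_ hcd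
    rw [sub_eq_add_neg]; exact add_mem_cS ha (neg_mem_cS hb)
  have h1 : (c - d') * x ∈ cS A (2 * ((n + n) * n)) (d + d) := mul_mem_cS hcd hx
  have h2 : ((a - b) + (c - d')) * y ∈ cS A (2 * (((n + n) + (n + n)) * n)) (d + d) :=
    mul_mem_cS hab hy
  have := add_mem_cS h1 h2
  rw [show 2 * ((n + n) * n) + 2 * ((((n + n)) + (n + n)) * n) = 12 * n ^ 2 by ring,
    show d + d = 2 * d by ring] at this
  exact this

/-- Growth step: squaring the size of a class subset. -/
lemma growth_step {X : Finset (ZMod p)} {n d : ℕ}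
    (hXc : X ⊆ cS A n d) (h4 : 4 ≤ X.card) (hsz : 4 * X.card ^ 2 ≤ p) :
    ∃ X' : Finset (ZMod p), X' ⊆ cS A (12 * n ^ 2) (2 * d) ∧ X.card ^ 2 ≤ 2 * X'.card := by
  have hX : X.Nonempty := Finset.card_pos.1 (by omega)
  have hsq : X.card ^ 2 = X.card * X.card := sq X.card
  set Q := X.card * X.card with hQ
  have hQ16 : 16 ≤ Q := by
    have := Nat.mul_le_mul h4 h4; omega
  set r := Q / 2 with hr'
  have hrp : Q ^ 2 < r * p := by
    have h2 : 4 * Q ≤ p := by omega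
    have h3 : r * (4 * Q) ≤ r * p := Nat.mul_le_mul_left r h2
    have hQpos : 0 < Q := by omega
    have m1 : Q * Q ≤ (2 * r + 1) * Q := Nat.mul_le_mul_right Q (by omega)
    have m2 : (2 * r + 1) * Q < 4 * r * Q := (Nat.mul_lt_mul_right hQpos).2 (by omega)
    calc Q ^ 2 = Q * Q := sq Q
      _ < 4 * r * Q := lt_of_le_of_lt m1 m2
      _ = r * (4 * Q) := by ring
      _ ≤ r * p := h3
  obtain ⟨a, ha, b, hb, c, hc, d', hd', hcd, hcard⟩ :=
    pivot_lemma X X hX (by omega) r hrp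
  refine ⟨Finset.image
      (fun q : ZMod p × ZMod p => (c - d') * q.1 + ((a - b) + (c - d')) * q.2) (X ×ˢ X),
    ?_, ?_⟩
  · intro w hw
    obtain ⟨q, hq, rfl⟩ := Finset.mem_image.1 hw
    rw [Finset.mem_product] at hq
    exact pivot_image_mem (hXc hq.1) (hXc hq.2) (hXc ha) (hXc hb) (hXc hc) (hXc hd')
  · omega

/-- Escape: once a class subset is large (`4|X|² > p`), some class set is everything. -/
lemma escape (hp : p.Prime) {X : Finset (ZMod p)} {n d : ℕ}
    (hXc : X ⊆ cS A n d) (h4 : 4 ≤ X.card) (hbig : p < 4 * X.card ^ 2)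
    (hplarge : 1000 ≤ p) :
    ∃ n' d', n' ≤ 156 * n ^ 2 + 21 * n ∧ d ≤ d' ∧ d' ≤ 2 * d + 1 ∧
      cS A n' d' = Finset.univ := by
  have hX : X.Nonempty := Finset.card_pos.1 (by omega)
  have hsq : X.card ^ 2 = X.card * X.card := sq X.card
  set s := X.card with hs
  have hsp : s ≤ p := by
    have := Finset.card_le_univ X
    rwa [ZMod.card] at this
  rcases le_or_gt p (20 * s) with hcase | hcase
  · -- X is already huge: directly use Cauchy-Davenport
    refine ⟨21 * n, d, Nat.le_add_left _ _, le_refl d, by omega, ?_⟩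
    have hT : ksum 21 X ⊆ cS A (21 * n) d := by
      refine subset_trans (ksum_mono hXc 21) ?_
      exact ksum_cS_subset 21 n d
    have h20 := ksum_card_ge hp hX 20
    norm_num at h20
    have hcard : p ≤ (ksum 21 X).card := by omega
    have hle : (ksum 21 X).card ≤ p := by
      have := Finset.card_le_univ (ksum 21 X)
      rwa [ZMod.card] at this
    have huniv : ksum 21 X = Finset.univ :=
      Finset.eq_univ_of_card _ (by rw [le_antisymm hle hcard, ZMod.card])
    exact Finset.univ_subset_iff.1 (huniv ▸ hT)
  · -- main case
    set u := p / (9 * s) with hu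
    set t := u + 1 with ht
    have h9s : 9 * s ≤ p := by omega
    have hu1 : 1 ≤ u := by
      rw [hu]; exact (Nat.one_le_div_iff (by omega)).2 h9s
    have ht2 : 2 ≤ t := by omega
    have hdm : 9 * s * u + p % (9 * s) = p := by rw [hu]; exact Nat.div_add_mod p (9 * s)
    have hmod : p % (9 * s) < 9 * s := Nat.mod_lt p (by omega)
    have h9Q : p < 9 * (s * t) := by
      have : 9 * (s * t) = 9 * s * u + 9 * s := by rw [ht]; ring
      omega
    have hsu : 9 * (s * u) ≤ p := by
      have : 9 * (s * u) = 9 * s * u := by ring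
      omega
    -- t ≤ s
    have hts : t ≤ s := by
      have h2 : p < 4 * (s * s) := by omega
      have h3 : 9 * (s * u) < 4 * (s * s) := lt_of_le_of_lt hsu h2
      have h4' : 9 * u < 4 * s := by
        by_contra hcon
        push_neg at hcon
        have : 4 * s * s ≤ 9 * u * s := Nat.mul_le_mul_right s hcon
        nlinarith [h3]
      omega
    set Q := s * t with hQdef
    have hQQ : Q = s * u + s := by rw [hQdef, ht]; ring
    have hQub : 6 * Q ≤ p := by omega
    have hQlb : p < 9 * Q := h9Q
    set r := Q / 5 with hrdef
    have hQ24 : 24 < Q := by omega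
    have hr5 : 5 ≤ r := by omega
    have hrp : Q ^ 2 < r * p := by
      have k1 : r * (6 * Q) ≤ r * p := Nat.mul_le_mul_left r hQub
      have hQpos : 0 < Q := by omega
      have m1 : Q * Q ≤ (5 * r + 4) * Q := Nat.mul_le_mul_right Q (by omega)
      have m2 : (5 * r + 4) * Q < 6 * r * Q := (Nat.mul_lt_mul_right hQpos).2 (by omega)
      calc Q ^ 2 = Q * Q := sq Q
        _ < 6 * r * Q := lt_of_le_of_lt m1 m2
        _ = r * (6 * Q) := by ring
        _ ≤ r * p := k1
    obtain ⟨Y, hYX, hYcard⟩ := Finset.exists_subset_card_eq hts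
    have hXY : X.card * Y.card = Q := by rw [hYcard, ← hs]
    obtain ⟨a, ha, b, hb, c, hc, d', hd', hcd, hcard⟩ :=
      pivot_lemma X Y hX (by omega) r (by rw [hXY]; exact hrp)
    rw [hXY] at hcard
    set W := Finset.image
      (fun q : ZMod p × ZMod p => (c - d') * q.1 + ((a - b) + (c - d')) * q.2) (X ×ˢ Y) with hW
    have hWc : W ⊆ cS A (12 * n ^ 2) (2 * d) := by
      intro w hw
      obtain ⟨q, hq, rfl⟩ := Finset.mem_image.1 hw
      rw [Finset.mem_product] at hq
      exact pivot_image_mem (hXc hq.1) (hXc (hYX hq.2)) (hXc ha) (hXc hb)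
        (hXc (hYX hc)) (hXc (hYX hd'))
    have hWlarge : p + 12 ≤ 13 * W.card := by omega
    have hWne : W.Nonempty := Finset.card_pos.1 (by omega)
    refine ⟨13 * (12 * n ^ 2), 2 * d,
      le_trans (le_of_eq (by ring)) (Nat.le_add_right (156 * n ^ 2) (21 * n)),
      by omega, by omega, ?_⟩
    have hT : ksum 13 W ⊆ cS A (13 * (12 * n ^ 2)) (2 * d) := by
      refine subset_trans (ksum_mono hWc 13) ?_
      exact ksum_cS_subset 13 _ _
    have h12 := ksum_card_ge hp hWne 12
    norm_num at h12
    have hcard13 : p ≤ (ksum 13 W).card := by omega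
    have hle : (ksum 13 W).card ≤ p := by
      have := Finset.card_le_univ (ksum 13 W)
      rwa [ZMod.card] at this
    have huniv : ksum 13 W = Finset.univ :=
      Finset.eq_univ_of_card _ (by rw [le_antisymm hle hcard13, ZMod.card])
    exact Finset.univ_subset_iff.1 (huniv ▸ hT)

end Growth

section Loop

variable {p : ℕ} [Fact p.Prime]

private def itf : ℕ → ℕ := fun n => 12 * n ^ 2

lemma itf_one_le (i : ℕ) : 1 ≤ itf^[i] 1 := by
  induction i with
  | zero => simp
  | succ i ih =>
      rw [Function.iterate_succ_apply']
      show (1:ℕ) ≤ 12 * (itf^[i] 1) ^ 2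
      nlinarith
lemma itf_mono {i j : ℕ} (hij : i ≤ j) : itf^[i] 1 ≤ itf^[j] 1 := by
  induction j with
  | zero => simp [Nat.le_zero.1 hij]
  | succ j ih =>
      rcases Nat.lt_or_ge i (j+1) with h | h
      · have h1 := ih (by omega)
        have h2 : itf^[j] 1 ≤ itf^[j+1] 1 := by
          rw [Function.iterate_succ_apply']
          show itf^[j] 1 ≤ 12 * (itf^[j] 1) ^ 2
          have := itf_one_le j
          nlinarith
        omega
      · have : i = j + 1 := by omega
        simp [this]

/-- Reaching the full group for large `p`. -/
lemma reach_univ (hp : p.Prime) {A : Finset (ZMod p)} (istar : ℕ) (histar : 1 ≤ istar)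
    (hplarge : 1000 ≤ p) (hs4 : 4 ≤ (A - A).card)
    (hcontra : p < (A - A).card ^ (2 ^ (istar - 1))) :
    ∃ n' d', n' ≤ 156 * (itf^[istar] 1) ^ 2 + 21 * (itf^[istar] 1) ∧
      d' ≤ 2 ^ (istar + 1) + 1 ∧ cS A n' d' = Finset.univ := by
  set s₀ := (A - A).card with hs₀
  set M' := itf^[istar] 1 with hM'
  set GOAL := ∃ n' d', n' ≤ 156 * M' ^ 2 + 21 * M' ∧ d' ≤ 2 ^ (istar + 1) + 1 ∧
      cS A n' d' = Finset.univ with hGOAL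
  have escape_goal : ∀ i, i ≤ istar → ∀ (n d : ℕ) (X : Finset (ZMod p)),
      X ⊆ cS A n d → n ≤ itf^[i] 1 → d ≤ 2 ^ i → 4 ≤ X.card →
      p < 4 * X.card ^ 2 → GOAL := by
    intro i hi n d X hXc hn hd h4 hbig
    obtain ⟨n', d', hn', hd'1, hd'2, huniv⟩ := escape hp hXc h4 hbig hplarge
    refine ⟨n', d', ?_, ?_, huniv⟩
    · have h1 : n ≤ M' := le_trans hn (itf_mono hi)
      have h2 : 156 * n ^ 2 + 21 * n ≤ 156 * M' ^ 2 + 21 * M' := by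
        have := Nat.pow_le_pow_left h1 2
        have := Nat.mul_le_mul_left 156 (Nat.pow_le_pow_left h1 2)
        have := Nat.mul_le_mul_left 21 h1
        omega
      omega
    · have : 2 * d + 1 ≤ 2 * 2 ^ i + 1 := by omega
      have h2 : (2:ℕ) * 2 ^ i = 2 ^ (i + 1) := by rw [pow_succ]; ring
      have h3 : (2:ℕ) ^ (i+1) ≤ 2 ^ (istar + 1) := Nat.pow_le_pow_right (by omega) (by omega)
      omega
  have main : ∀ i, i ≤ istar → GOAL ∨ ∃ (n : ℕ) (d : ℕ) (X : Finset (ZMod p)), X ⊆ cS A n d ∧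
      n ≤ itf^[i] 1 ∧ d ≤ 2 ^ i ∧ 4 ≤ X.card ∧
      s₀ ^ (2 ^ i) ≤ 2 ^ (2 ^ i - 1) * X.card := by
    intro i
    induction i with
    | zero =>
        intro _
        right
        refine ⟨1, 1, A - A, ?_, by simp, by simp, hs4, by simp [hs₀]⟩
        intro z hz
        obtain ⟨u, hu, v, hv, rfl⟩ := Finset.mem_sub.1 hz
        apply sub_mem_cS <;> · rw [ksum_one, pow_one]; assumption
    | succ i ih =>
        intro hi
        rcases ih (by omega) with hg | hp'
        · exact Or.inl hg
        · obtain ⟨n, d, X, hXc, hn, hd, h4, hsize⟩ := hp'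
          rcases Nat.lt_or_ge p (4 * X.card ^ 2) with hbig | hsmall
          · exact Or.inl (escape_goal i (by omega) n d X hXc hn hd h4 hbig)
          · right
            obtain ⟨X', hX'c, hX'card⟩ := growth_step hXc h4 hsmall
            have hsqX : X.card ^ 2 = X.card * X.card := sq X.card
            have h16 : 16 ≤ X.card ^ 2 := by
              have := Nat.mul_le_mul h4 h4; omega
            refine ⟨12 * n ^ 2, 2 * d, X', hX'c, ?_, ?_, by omega, ?_⟩
            · rw [Function.iterate_succ_apply']
              show 12 * n ^ 2 ≤ 12 * (itf^[i] 1) ^ 2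
              exact Nat.mul_le_mul_left 12 (Nat.pow_le_pow_left hn 2)
            · rw [pow_succ]; omega
            · -- size invariant propagation
              have e1 : s₀ ^ (2 ^ (i+1)) = (s₀ ^ (2 ^ i)) ^ 2 := by
                rw [← pow_mul, pow_succ]
              have e2 := Nat.pow_le_pow_left hsize 2
              have e3 : (2 ^ (2 ^ i - 1) * X.card) ^ 2
                  = 2 ^ (2 ^ (i+1) - 2) * X.card ^ 2 := by
                rw [mul_pow, ← pow_mul]
                congr 2
                have h1 : 1 ≤ (2:ℕ) ^ i := Nat.one_le_two_pow
                have h2 : (2:ℕ) ^ (i+1) = 2 * 2 ^ i := by rw [pow_succ]; ring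
                omega
              have e4 : 2 ^ (2 ^ (i+1) - 2) * X.card ^ 2
                  ≤ 2 ^ (2 ^ (i+1) - 2) * (2 * X'.card) :=
                Nat.mul_le_mul_left _ hX'card
              have e5 : 2 ^ (2 ^ (i+1) - 2) * (2 * X'.card)
                  = 2 ^ (2 ^ (i+1) - 1) * X'.card := by
                have h1 : 1 ≤ (2:ℕ) ^ i := Nat.one_le_two_pow
                have h2 : (2:ℕ) ^ (i+1) = 2 * 2 ^ i := by rw [pow_succ]; ring
                have h3 : (2:ℕ) ^ (2 ^ (i+1) - 1) = 2 ^ (2 ^ (i+1) - 2) * 2 := by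
                  rw [← pow_succ]
                  congr 1
                  omega
                rw [h3]; ring
              calc s₀ ^ (2 ^ (i+1)) = (s₀ ^ (2 ^ i)) ^ 2 := e1
                _ ≤ (2 ^ (2 ^ i - 1) * X.card) ^ 2 := e2
                _ = 2 ^ (2 ^ (i+1) - 2) * X.card ^ 2 := e3
                _ ≤ 2 ^ (2 ^ (i+1) - 2) * (2 * X'.card) := e4
                _ = 2 ^ (2 ^ (i+1) - 1) * X'.card := e5
  rcases main istar (le_refl istar) with hg | hp'
  · exact hg
  · -- P istar is contradictory
    exfalso
    obtain ⟨n, d, X, hXc, hn, hd, h4, hsize⟩ := hp'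
    set K := 2 ^ (istar - 1) with hK
    have hM : 2 ^ istar = 2 * K := by
      rw [hK, ← pow_succ']
      congr 1
      omega
    have hXp : X.card ≤ p := by
      have := Finset.card_le_univ X
      rwa [ZMod.card] at this
    have h1 : s₀ ^ (2 ^ istar) = s₀ ^ K * s₀ ^ K := by
      rw [hM, two_mul, pow_add]
    have h2 : (2:ℕ) ^ (2 * K) ≤ s₀ ^ K := by
      calc (2:ℕ) ^ (2 * K) = 4 ^ K := by rw [pow_mul]; norm_num
        _ ≤ s₀ ^ K := Nat.pow_le_pow_left hs4 K
    have h3 : 2 ^ (2 * K) * p < s₀ ^ (2 ^ istar) := by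
      rw [h1]
      calc 2 ^ (2 * K) * p < 2 ^ (2 * K) * s₀ ^ K :=
            (Nat.mul_lt_mul_left (Nat.pow_pos (by norm_num : 0 < 2) : 0 < 2 ^ (2 * K))).2 hcontra
        _ ≤ s₀ ^ K * s₀ ^ K := Nat.mul_le_mul_right _ h2
    have h4' : s₀ ^ (2 ^ istar) ≤ 2 ^ (2 ^ istar - 1) * p := by
      calc s₀ ^ (2 ^ istar) ≤ 2 ^ (2 ^ istar - 1) * X.card := hsize
        _ ≤ 2 ^ (2 ^ istar - 1) * p := Nat.mul_le_mul_left _ hXp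
    have h5 : (2:ℕ) ^ (2 * K) = 2 * 2 ^ (2 ^ istar - 1) := by
      rw [← hM, ← pow_succ']
      congr 1
      have : 1 ≤ (2:ℕ) ^ istar := Nat.one_le_two_pow
      omega
    rw [h5] at h3
    have hppos : 0 < p := by omega
    nlinarith [h3, h4', hppos]

end Loop

section Final

lemma cover_pad {p : ℕ} [Fact p.Prime] {A : Finset (ZMod p)} {n d k : ℕ}
    (huniv : cS A n d = Finset.univ) {a : ZMod p} (ha : a ∈ A) (ha0 : a ≠ 0)
    (hn : n ≤ k) (hd : d ≤ k) (x : ZMod p) : x ∈ cS A k k := by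
  have hy : x * (a ^ (k - d))⁻¹ ∈ cS A n d := by rw [huniv]; exact Finset.mem_univ _
  have := cS_pad hy ha hn hd
  rwa [mul_assoc, inv_mul_cancel₀ (pow_ne_zero _ ha0), mul_one] at this

lemma cover_small {p : ℕ} [Fact p.Prime] {A : Finset (ZMod p)} {k : ℕ}
    (hA2 : 2 ≤ A.card) (hpk : p ≤ k) (x : ZMod p) : x ∈ cS A k k := by
  have hp2 : 2 ≤ p := (Fact.out : p.Prime).two_le
  have hk1 : 1 ≤ k := by omega
  obtain ⟨a', ha', b', hb', hab'⟩ := Finset.one_lt_card.1 hA2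
  obtain ⟨a, ha, b, hb, hab, ha0⟩ : ∃ a ∈ A, ∃ b ∈ A, a ≠ b ∧ a ≠ 0 := by
    rcases eq_or_ne a' 0 with h0 | h0
    · refine ⟨b', hb', a', ha', hab'.symm, ?_⟩
      rw [h0] at hab'
      exact hab'.symm
    · exact ⟨a', ha', b', hb', hab', h0⟩
  have hu : a ^ k ∈ A ^ k := Finset.pow_mem_pow ha
  have hv : a ^ (k - 1) * b ∈ A ^ k := by
    have h1 : a ^ (k-1) * b ∈ A ^ (k-1) * A ^ 1 :=
      Finset.mul_mem_mul (Finset.pow_mem_pow ha) (by simpa using hb)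
    rwa [← pow_add, show k - 1 + 1 = k by omega] at h1
  have hpow : a ^ k = a ^ (k - 1) * a := by
    rw [← pow_succ, show k - 1 + 1 = k by omega]
  have huv : a ^ k - a ^ (k - 1) * b ≠ 0 := by
    have hfac : a ^ k - a ^ (k - 1) * b = a ^ (k - 1) * (a - b) := by rw [hpow]; ring
    rw [hfac]
    exact mul_ne_zero (pow_ne_zero _ ha0) (sub_ne_zero.2 hab)
  set i : ℕ := (x / (a ^ k - a ^ (k - 1) * b)).val with hidef
  have hi : ((i : ℕ) : ZMod p) = x / (a ^ k - a ^ (k - 1) * b) := by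
    rw [hidef, ZMod.natCast_val, ZMod.cast_id]
  have hip : i < p := ZMod.val_lt _
  have hik : i ≤ k := by omega
  have hx : (i : ZMod p) * (a ^ k - a ^ (k - 1) * b) = x := by
    rw [hi]
    exact div_mul_cancel₀ x huv
  refine mem_cS_iff.2 ⟨k • a ^ k, nsmul_mem_ksum hu k,
    i • (a ^ (k - 1) * b) + (k - i) • a ^ k, ?_, ?_⟩
  · have := add_mem_ksum (nsmul_mem_ksum hv i) (nsmul_mem_ksum hu (k - i))
    rwa [show i + (k - i) = k by omega] at this
  · rw [nsmul_eq_mul, nsmul_eq_mul, nsmul_eq_mul, Nat.cast_sub hik]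
    linear_combination -hx

theorem stmt_2 (δ : ℝ) (hδ₀ : 0 < δ) (hδ₁ : δ < 1) :
    ∃ k : ℕ, 0 < k ∧ ∀ p : ℕ, p.Prime → ∀ A : Finset (ZMod p),
      (p : ℝ) ^ δ ≤ (A.card : ℝ) →
      ∀ x : ZMod p, x ∈ ksum k (A ^ k) - ksum k (A ^ k) := by
  set istar : ℕ := ⌈4 / δ⌉₊ + 1 with histar
  set NBB : ℕ := 156 * (itf^[istar] 1) ^ 2 + 21 * (itf^[istar] 1) with hNBB
  set DBB : ℕ := 2 ^ (istar + 1) + 1 with hDBB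
  set p₀ : ℕ := max 1000 (⌈(4:ℝ) ^ (1/δ)⌉₊ + 1) with hp₀
  set k : ℕ := max (max NBB DBB) p₀ with hk
  have hkp₀ : p₀ ≤ k := le_max_right _ _
  have hk1000 : 1000 ≤ k := le_trans (le_max_left _ _) hkp₀
  refine ⟨k, by omega, ?_⟩
  intro p hp A hA x
  haveI : Fact p.Prime := ⟨hp⟩
  have hp2 : 2 ≤ p := hp.two_le
  have hA2 : 2 ≤ A.card := by
    have h1 : (1:ℝ) < (p:ℝ) ^ δ := by
      rw [Real.one_lt_rpow_iff_of_pos (by positivity)]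
      left
      exact ⟨by exact_mod_cast hp2, hδ₀⟩
    have h2 : (1:ℝ) < (A.card : ℝ) := lt_of_lt_of_le h1 hA
    exact_mod_cast h2
  show x ∈ cS A k k
  by_cases hpp : p < p₀
  · exact cover_small hA2 (by omega) x
  · push_neg at hpp
    have hplarge : 1000 ≤ p := le_trans (le_max_left _ _) hpp
    have hceil : (⌈(4:ℝ) ^ (1/δ)⌉₊ + 1 : ℕ) ≤ p := le_trans (le_max_right _ _) hpp
    -- |A| ≥ 4
    have hp4 : (4:ℝ) ≤ (p:ℝ) ^ δ := by
      have hble : ((4:ℝ) ^ (1/δ)) ≤ (p:ℝ) := by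
        have h1 : ((⌈(4:ℝ) ^ (1/δ)⌉₊ : ℕ) : ℝ) ≤ (p:ℝ) := by exact_mod_cast (by omega : ⌈(4:ℝ) ^ (1/δ)⌉₊ ≤ p)
        exact le_trans (Nat.le_ceil _) h1
      calc (4:ℝ) = ((4:ℝ) ^ (1/δ)) ^ δ := by
            rw [← Real.rpow_mul (by norm_num), one_div, inv_mul_cancel₀ (ne_of_gt hδ₀),
              Real.rpow_one]
        _ ≤ (p:ℝ) ^ δ := Real.rpow_le_rpow (by positivity) hble (le_of_lt hδ₀)
    have hA4 : 4 ≤ A.card := by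
      have : (4:ℝ) ≤ (A.card : ℝ) := le_trans hp4 hA
      exact_mod_cast this
    -- |A - A| ≥ |A|
    have hsub : A.card ≤ (A - A).card := by
      obtain ⟨a₀, ha₀⟩ : A.Nonempty := Finset.card_pos.1 (by omega)
      have hinj : Function.Injective (fun z : ZMod p => z - a₀) := by
        intro u v h
        simpa using congrArg (· + a₀) h
      calc A.card = (A.image (fun z => z - a₀)).card :=
            (Finset.card_image_of_injective _ hinj).symm
        _ ≤ (A - A).card := by
            apply Finset.card_le_card
            intro w hw
            obtain ⟨z, hz, rfl⟩ := Finset.mem_image.1 hw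
            exact Finset.sub_mem_sub hz ha₀
    have hs4 : 4 ≤ (A - A).card := le_trans hA4 hsub
    -- the contradiction hypothesis for reach_univ
    set K : ℕ := 2 ^ (istar - 1) with hK
    have hδK : (2:ℝ) ≤ δ * (K : ℕ) := by
      have h1 : (4:ℝ)/δ ≤ (⌈4/δ⌉₊ : ℝ) := Nat.le_ceil _
      have h2 : (⌈4/δ⌉₊ : ℕ) ≤ K := by
        rw [hK, histar, Nat.add_sub_cancel]
        exact le_of_lt Nat.lt_two_pow_self
      have h3 : ((⌈4/δ⌉₊ : ℕ) : ℝ) ≤ (K : ℝ) := by exact_mod_cast h2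
      have h4 : (4:ℝ)/δ ≤ (K:ℝ) := le_trans h1 h3
      have h5 : δ * ((4:ℝ)/δ) ≤ δ * K := mul_le_mul_of_nonneg_left h4 (le_of_lt hδ₀)
      rw [mul_div_cancel₀ _ (ne_of_gt hδ₀)] at h5
      linarith
    have hcastA : (p:ℝ)^δ ≤ ((A - A).card : ℝ) := le_trans hA (by exact_mod_cast hsub)
    have hppos : (0:ℝ) < (p:ℝ) := by positivity
    have hfinal : (p:ℝ) < (((A - A).card : ℕ) : ℝ) ^ (K : ℕ) := by
      have step1 : (p:ℝ) < (p:ℝ) ^ (2:ℕ) := by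
        have : (2:ℝ) ≤ (p:ℝ) := by exact_mod_cast hp2
        nlinarith
      have step2 : (p:ℝ) ^ (2:ℕ) ≤ (p:ℝ) ^ (δ * K) := by
        rw [← Real.rpow_natCast (p:ℝ) 2]
        have h1p : (1:ℝ) ≤ (p:ℝ) := by
          have h2p : (2:ℝ) ≤ (p:ℝ) := by exact_mod_cast hp2
          linarith
        apply Real.rpow_le_rpow_of_exponent_le h1p
        exact_mod_cast hδK
      have step3 : (p:ℝ) ^ (δ * K) = ((p:ℝ) ^ δ) ^ (K:ℕ) := by
        rw [Real.rpow_mul (le_of_lt hppos), Real.rpow_natCast]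
      have step4 : ((p:ℝ) ^ δ) ^ (K:ℕ) ≤ (((A - A).card : ℕ) : ℝ) ^ (K:ℕ) :=
        pow_le_pow_left₀ (Real.rpow_nonneg (le_of_lt hppos) δ) hcastA K
      calc (p:ℝ) < (p:ℝ) ^ (2:ℕ) := step1
        _ ≤ (p:ℝ) ^ (δ * K) := step2
        _ = ((p:ℝ) ^ δ) ^ (K:ℕ) := step3
        _ ≤ _ := step4
    have hcontra : p < (A - A).card ^ K := by exact_mod_cast hfinal
    obtain ⟨n', d', hn', hd', huniv⟩ :=
      reach_univ hp istar (by omega) hplarge hs4 hcontra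
    -- pick a nonzero element of A
    obtain ⟨a', ha', b', hb', hab'⟩ := Finset.one_lt_card.1 hA2
    obtain ⟨a, ha, ha0⟩ : ∃ a ∈ A, a ≠ 0 := by
      rcases eq_or_ne a' 0 with h0 | h0
      · exact ⟨b', hb', by rw [h0] at hab'; exact hab'.symm⟩
      · exact ⟨a', ha', h0⟩
    have hn'k : n' ≤ k := by
      have : NBB ≤ k := le_trans (le_max_left _ _) (le_max_left _ _)
      omega
    have hd'k : d' ≤ k := by
      have : DBB ≤ k := le_trans (le_max_right _ _) (le_max_left _ _)
      omega
    exact cover_pad huniv ha ha0 hn'k hd'k x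

end Final
end

section
/- There is an absolute constant C such that: if A ⊆ F_p is finite nonempty, K ≥ 2, and ξ₁, ξ₂ ∈ F_p^× satisfy |A + ξᵢ·A| ≤ K|A| for i = 1, 2, then |A + ξ₁ξ₂·A| ≤ K^C|A|. -/
open Finset
open scoped Pointwise

theorem stmt_6 :
    ∃ C : ℝ, 0 < C ∧ ∀ p : ℕ, p.Prime → ∀ A : Finset (ZMod p), A.Nonempty →
      ∀ K : ℝ, 2 ≤ K → ∀ ξ₁ ξ₂ : ZMod p, ξ₁ ≠ 0 → ξ₂ ≠ 0 →
      ((A + ξ₁ • A).card : ℝ) ≤ K * A.card →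
      ((A + ξ₂ • A).card : ℝ) ≤ K * A.card →
      ((A + (ξ₁ * ξ₂) • A).card : ℝ) ≤ K ^ C * A.card := by
  refine ⟨2, by norm_num, ?_⟩
  intro p hp A hA K hK ξ₁ ξ₂ h1 h2 hA1 hA2
  haveI := Fact.mk hp
  have hinj : ∀ ξ : ZMod p, ξ ≠ 0 → ∀ S : Finset (ZMod p), (ξ • S).card = S.card := by
    intro ξ hξ S
    exact Finset.card_smul_finset (Units.mk0 ξ hξ) S
  have key := Finset.ruzsa_triangle_inequality_add_add_add A (ξ₁ • A) ((ξ₁ * ξ₂) • A)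
  have hsm : ξ₁ • A + (ξ₁ * ξ₂) • A = ξ₁ • (A + ξ₂ • A) := by
    rw [smul_add, smul_smul]
  have hc1 : (ξ₁ • A).card = A.card := hinj ξ₁ h1 A
  have hc2 : (ξ₁ • A + (ξ₁ * ξ₂) • A).card = (A + ξ₂ • A).card := by
    rw [hsm, hinj ξ₁ h1]
  rw [hc1, hc2] at key
  have hA0 : (0:ℝ) < A.card := by exact_mod_cast hA.card_pos
  have key' : ((A + (ξ₁ * ξ₂) • A).card : ℝ) * A.card ≤
      ((A + ξ₁ • A).card : ℝ) * (A + ξ₂ • A).card := by exact_mod_cast key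
  have hK0 : (0:ℝ) ≤ K * A.card := le_trans (by positivity) hA1
  calc ((A + (ξ₁ * ξ₂) • A).card : ℝ)
      = ((A + (ξ₁ * ξ₂) • A).card : ℝ) * A.card / A.card := by field_simp
    _ ≤ ((A + ξ₁ • A).card : ℝ) * (A + ξ₂ • A).card / A.card := by
        apply div_le_div_of_nonneg_right key' hA0.le |>.trans_eq rfl
    _ ≤ (K * A.card) * (K * A.card) / A.card := by
        apply div_le_div_of_nonneg_right _ hA0.le
        exact mul_le_mul hA1 hA2 (by positivity) hK0
    _ = K ^ (2:ℕ) * A.card := by field_simp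
    _ = K ^ (2:ℝ) * A.card := by
        rw [← Real.rpow_natCast K 2]; norm_num
end

section
/- There is an absolute constant C such that: if A ⊆ F_p is finite nonempty, K ≥ 2, and ξ₁, ξ₂ ∈ F_p^× satisfy ξ₁ + ξ₂ ≠ 0 and |A + ξᵢ·A| ≤ K|A| for i = 1, 2, then |A + (ξ₁+ξ₂)·A| ≤ K^C|A|. -/
open Finset
open scoped Pointwise

theorem stmt_7 :
    ∃ C : ℝ, 0 < C ∧ ∀ p : ℕ, p.Prime → ∀ A : Finset (ZMod p), A.Nonempty →
      ∀ K : ℝ, 2 ≤ K → ∀ ξ₁ ξ₂ : ZMod p, ξ₁ ≠ 0 → ξ₂ ≠ 0 → ξ₁ + ξ₂ ≠ 0 →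
      ((A + ξ₁ • A).card : ℝ) ≤ K * A.card →
      ((A + ξ₂ • A).card : ℝ) ≤ K * A.card →
      ((A + (ξ₁ + ξ₂) • A).card : ℝ) ≤ K ^ C * A.card := by
  refine ⟨10, by norm_num, fun p hp A hA K hK ξ₁ ξ₂ hξ₁ hξ₂ hξ h1 h2 ↦ ?_⟩
  haveI : Fact p.Prime := ⟨hp⟩
  have hK0 : (0:ℝ) ≤ K := by linarith
  have hK1 : (1:ℝ) ≤ K := by linarith
  have hn : (0:ℝ) < A.card := by exact_mod_cast hA.card_pos
  set n : ℝ := (A.card : ℝ)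
  -- card of dilates
  have hcard : ∀ ξ : ZMod p, ξ ≠ 0 → (ξ • A).card = A.card := fun ξ hξ ↦ by
    rw [smul_finset_def]
    exact card_image_of_injective _ (MulAction.injective₀ hξ)
  -- step 1 : |A + A| ≤ K^2 n  via Ruzsa triangle with middle ξ₁ • A
  have hAA : ((A + A).card : ℝ) ≤ K ^ 2 * n := by
    have t := ruzsa_triangle_inequality_add_add_add A (ξ₁ • A) A
    have t' : ((A + A).card : ℝ) * n ≤ (K * n) * (K * n) := by
      have e1 : (ξ₁ • A + A) = A + ξ₁ • A := add_comm _ _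
      have := (Nat.cast_le (α := ℝ)).2 t
      push_cast at this
      rw [hcard ξ₁ hξ₁, e1] at this
      calc ((A + A).card : ℝ) * n ≤ ((A + ξ₁ • A).card : ℝ) * ((A + ξ₁ • A).card : ℝ) := this
        _ ≤ (K * n) * (K * n) := by
            apply mul_le_mul h1 h1 (by positivity) (by positivity)
    have := (div_le_div_iff_of_pos_right hn).2 t'  -- maybe not; do directly
    nlinarith [t']
  -- step 2 : Plünnecke-Ruzsa : |3A - A| ≤ (|A+A|/n)^4 n ≤ K^8 n
  have hP : ((3 • A - 1 • A).card : ℝ) ≤ K ^ 8 * n := by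
    have t := pluennecke_ruzsa_inequality_nsmul_sub_nsmul_add hA A 3 1
    have t' : ((3 • A - 1 • A).card : ℝ) ≤ (((A + A).card : ℝ) / n) ^ 4 * n := by
      exact_mod_cast (NNRat.cast_le (K := ℝ)).2 t |>.trans_eq (by push_cast; norm_num; rfl)
    refine t'.trans ?_
    have hq : ((A + A).card : ℝ) / n ≤ K ^ 2 := by
      rw [div_le_iff₀ hn]; exact hAA
    have : (((A + A).card : ℝ) / n) ^ 4 ≤ (K ^ 2) ^ 4 := by
      apply pow_le_pow_left₀ (by positivity) hq
    calc (((A + A).card : ℝ) / n) ^ 4 * n ≤ (K ^ 2) ^ 4 * n := by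
          apply mul_le_mul_of_nonneg_right this hn.le
      _ = K ^ 8 * n := by ring
  -- step 3 : Ruzsa covering : ξ₁ • A ⊆ F + (A - A) with |F| ≤ K
  obtain ⟨F, hFsub, hFcard, hcover⟩ := ruzsa_covering_add hA
    (by rw [show ξ₁ • A + A = A + ξ₁ • A from add_comm _ _]; exact h1)
  -- step 4 : bound D := A + (A - A) + ξ₂ • A
  have hD : ((A + (A - A) + ξ₂ • A).card : ℝ) ≤ K ^ 9 * n := by
    have t := ruzsa_triangle_inequality_add_add_add (A + (A - A)) A (ξ₂ • A)
    have hE : A + (A - A) + A = 3 • A - 1 • A := by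
      rw [one_nsmul, sub_eq_add_neg, sub_eq_add_neg, show (3:ℕ) • A = A + A + A by
        rw [show (3:ℕ) = 2+1 by norm_num, add_nsmul, two_nsmul, one_nsmul]]
      simp only [add_comm, add_assoc, add_left_comm]
    have t' := (Nat.cast_le (α := ℝ)).2 t
    push_cast at t'
    rw [hE] at t'
    have : ((A + (A - A) + ξ₂ • A).card : ℝ) * n ≤ (K ^ 8 * n) * (K * n) := by
      refine t'.trans ?_
      apply mul_le_mul hP h2 (by positivity) (by positivity)
    nlinarith [this]
  -- step 5 : combine
  have hsub : A + (ξ₁ + ξ₂) • A ⊆ F + (A + (A - A) + ξ₂ • A) := by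
    intro x hx
    rw [mem_add] at hx
    obtain ⟨a, ha, y, hy, rfl⟩ := hx
    rw [mem_smul_finset] at hy
    obtain ⟨b, hb, rfl⟩ := hy
    have h1b : ξ₁ • b ∈ F + (A - A) := hcover (smul_mem_smul_finset hb)
    rw [mem_add] at h1b
    obtain ⟨f, hf, z, hz, hfz⟩ := h1b
    refine mem_add.2 ⟨f, hf, a + z + ξ₂ • b, ?_, ?_⟩
    · exact add_mem_add (add_mem_add ha hz) (smul_mem_smul_finset hb)
    · simp only [smul_eq_mul] at hfz ⊢
      rw [add_mul, ← hfz]; ring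
  calc ((A + (ξ₁ + ξ₂) • A).card : ℝ) ≤ ((F + (A + (A - A) + ξ₂ • A)).card : ℝ) := by
        exact_mod_cast card_le_card hsub
    _ ≤ (F.card : ℝ) * ((A + (A - A) + ξ₂ • A).card : ℝ) := by exact_mod_cast card_add_le
    _ ≤ K * (K ^ 9 * n) := by
        apply mul_le_mul hFcard hD (by positivity) hK0
    _ = K ^ (10:ℕ) * n := by ring
    _ = K ^ (10:ℝ) * n := by rw [← Real.rpow_natCast K 10]; norm_num
end

section
/- Let S be a finite set, 0 < δ ≤ 1, and S₁, ..., S_k ⊆ S with |S_i| ≥ δ|S| for every i. Then there exists an index i such that |S_i ∩ S_j| ≥ δ²|S|/2 holds for at least δ²k/2 values of j ∈ {1, ..., k}. -/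
open Finset

theorem stmt_8 {α : Type*} [DecidableEq α] (S : Finset α) (k : ℕ) (hk : 0 < k)
    (δ : ℝ) (hδ₀ : 0 < δ) (hδ₁ : δ ≤ 1) (Si : Fin k → Finset α)
    (hsub : ∀ i, Si i ⊆ S) (hsize : ∀ i, δ * S.card ≤ ((Si i).card : ℝ)) :
    ∃ i : Fin k,
      δ ^ 2 * k / 2 ≤ ({j : Fin k | δ ^ 2 * S.card / 2 ≤ ((Si i ∩ Si j).card : ℝ)}.ncard : ℝ) := by
  classical
  have hkR : (0:ℝ) < k := by exact_mod_cast hk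
  by_cases hS : S.card = 0
  · refine ⟨⟨0, hk⟩, ?_⟩
    have hall : {j : Fin k | δ ^ 2 * S.card / 2 ≤ ((Si ⟨0,hk⟩ ∩ Si j).card : ℝ)} = Set.univ := by
      ext j
      simp only [Set.mem_setOf_eq, Set.mem_univ, iff_true, hS]
      push_cast
      have : (0:ℝ) ≤ ((Si ⟨0,hk⟩ ∩ Si j).card : ℝ) := Nat.cast_nonneg _
      linarith
    rw [hall, Set.ncard_univ]
    simp only [Nat.card_eq_fintype_card, Fintype.card_fin]
    have hδsq : δ^2 ≤ 1 := by nlinarith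
    nlinarith
  · have hSpos : (0:ℝ) < S.card := by
      have : 0 < S.card := Nat.pos_of_ne_zero hS
      exact_mod_cast this
    set ind : Fin k → α → ℝ := fun i x => if x ∈ Si i then 1 else 0 with hind
    set d : α → ℝ := fun x => ∑ i : Fin k, ind i x with hd
    have key : ∀ i j : Fin k, ((Si i ∩ Si j).card : ℝ) = ∑ x ∈ S, ind i x * ind j x := by
      intro i j
      have heq : Si i ∩ Si j = S.filter (fun x => x ∈ Si i ∧ x ∈ Si j) := by
        ext x
        simp only [mem_inter, mem_filter]
        exact ⟨fun h => ⟨hsub i h.1, h⟩, fun h => h.2⟩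
      rw [heq, card_filter]
      push_cast
      refine sum_congr rfl fun x _ => ?_
      by_cases h1 : x ∈ Si i <;> by_cases h2 : x ∈ Si j <;> simp [hind, h1, h2]
    have hdsum : ∑ x ∈ S, d x = ∑ i : Fin k, ((Si i).card : ℝ) := by
      rw [Finset.sum_comm]
      refine sum_congr rfl fun i _ => ?_
      have : Si i = S.filter (fun x => x ∈ Si i) := by
        ext x; simp only [mem_filter]
        exact ⟨fun h => ⟨hsub i h, h⟩, fun h => h.2⟩
      rw [this, card_filter]
      push_cast
      rfl
    have hdouble : ∑ i : Fin k, ∑ j : Fin k, ((Si i ∩ Si j).card : ℝ) = ∑ x ∈ S, (d x)^2 := by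
      simp_rw [key]
      rw [show (∑ i : Fin k, ∑ j : Fin k, ∑ x ∈ S, ind i x * ind j x)
          = ∑ x ∈ S, ∑ i : Fin k, ∑ j : Fin k, ind i x * ind j x from
        (sum_congr rfl fun i _ => Finset.sum_comm).trans Finset.sum_comm]
      refine sum_congr rfl fun x _ => ?_
      rw [sq, hd, Finset.sum_mul_sum]
    -- Cauchy-Schwarz
    have hCS : (∑ x ∈ S, d x) ^ 2 ≤ (S.card : ℝ) * ∑ x ∈ S, (d x)^2 :=
      sq_sum_le_card_mul_sum_sq
    have hlower : δ * k * S.card ≤ ∑ x ∈ S, d x := by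
      rw [hdsum]
      calc δ * k * S.card = ∑ _i : Fin k, δ * S.card := by
            rw [Finset.sum_const]; simp; ring
        _ ≤ ∑ i : Fin k, ((Si i).card : ℝ) := Finset.sum_le_sum fun i _ => hsize i
    have hdnn : 0 ≤ ∑ x ∈ S, d x := by
      apply Finset.sum_nonneg
      intro x _
      apply Finset.sum_nonneg
      intro i _
      simp only [hind]
      positivity
    have hsq : (δ * k * S.card)^2 ≤ (∑ x ∈ S, d x)^2 := by
      apply pow_le_pow_left₀ (by positivity) hlower
    have hbig : δ^2 * k^2 * S.card ≤ ∑ i : Fin k, ∑ j : Fin k, ((Si i ∩ Si j).card : ℝ) := by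
      rw [hdouble]
      have h1 : (δ * k * S.card)^2 ≤ (S.card : ℝ) * ∑ x ∈ S, (d x)^2 := hsq.trans hCS
      nlinarith [sq_nonneg (S.card : ℝ)]
    -- choose i
    obtain ⟨i, -, hi⟩ : ∃ i ∈ (univ : Finset (Fin k)),
        δ^2 * k * S.card ≤ ∑ j : Fin k, ((Si i ∩ Si j).card : ℝ) := by
      apply Finset.exists_le_of_sum_le ⟨⟨0, hk⟩, mem_univ _⟩
      rw [Finset.sum_const]
      simp only [card_univ, Fintype.card_fin, nsmul_eq_mul]
      nlinarith
    refine ⟨i, ?_⟩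
    set T : Finset (Fin k) := univ.filter (fun j => δ^2 * S.card / 2 ≤ ((Si i ∩ Si j).card : ℝ))
      with hT
    have hset : {j : Fin k | δ ^ 2 * S.card / 2 ≤ ((Si i ∩ Si j).card : ℝ)} = ↑T := by
      ext j; simp [hT]
    rw [hset, Set.ncard_coe_finset]
    -- bound the sum
    have hsplit : ∑ j : Fin k, ((Si i ∩ Si j).card : ℝ)
        ≤ (T.card : ℝ) * S.card + k * (δ^2 * S.card / 2) := by
      have : ∑ j : Fin k, ((Si i ∩ Si j).card : ℝ)
          = ∑ j ∈ T, ((Si i ∩ Si j).card : ℝ) + ∑ j ∈ Tᶜ, ((Si i ∩ Si j).card : ℝ) := by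
        rw [Finset.sum_add_sum_compl]
      rw [this]
      have h1 : ∑ j ∈ T, ((Si i ∩ Si j).card : ℝ) ≤ (T.card : ℝ) * S.card := by
        calc ∑ j ∈ T, ((Si i ∩ Si j).card : ℝ) ≤ ∑ _j ∈ T, (S.card : ℝ) := by
              refine Finset.sum_le_sum fun j _ => ?_
              exact_mod_cast Finset.card_le_card ((Finset.inter_subset_left).trans (hsub i))
          _ = (T.card : ℝ) * S.card := by rw [Finset.sum_const, nsmul_eq_mul]
      have h2 : ∑ j ∈ Tᶜ, ((Si i ∩ Si j).card : ℝ) ≤ k * (δ^2 * S.card / 2) := by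
        calc ∑ j ∈ Tᶜ, ((Si i ∩ Si j).card : ℝ) ≤ ∑ _j ∈ Tᶜ, (δ^2 * S.card / 2) := by
              refine Finset.sum_le_sum fun j hj => ?_
              rw [hT, Finset.mem_compl, Finset.mem_filter] at hj
              push_neg at hj
              exact (hj (mem_univ j)).le
          _ = (Tᶜ.card : ℝ) * (δ^2 * S.card / 2) := by rw [Finset.sum_const, nsmul_eq_mul]
          _ ≤ k * (δ^2 * S.card / 2) := by
              have : (Tᶜ.card : ℝ) ≤ k := by
                have := Finset.card_le_univ Tᶜ
                simp only [card_univ, Fintype.card_fin] at this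
                exact_mod_cast this
              exact mul_le_mul_of_nonneg_right this (by positivity)
      linarith
    have hfin : δ^2 * k * S.card ≤ (T.card : ℝ) * S.card + k * (δ^2 * S.card / 2) :=
      hi.trans hsplit
    nlinarith
end

section
/- Let H ⊆ F_p be a finite nonempty set, 0 < α < 1, and B ⊆ Spec_α(H). Then the number of ordered pairs (x, y) ∈ B × B with x − y ∈ Spec_{α²/2}(H) is at least (α²/2)|B|². -/
open Finset
open scoped Pointwise

/-- The additive character `a ↦ e(a/p) = e^{2πia/p}` on `ZMod p`. -/
noncomputable def ep (p : ℕ) (a : ZMod p) : ℂ :=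
  Complex.exp (2 * Real.pi * Complex.I * (a.val : ℂ) / (p : ℂ))

/-- The `α`-large spectrum of a finite set `H ⊆ ZMod p`. -/
noncomputable def Spec (p : ℕ) (α : ℝ) (H : Finset (ZMod p)) : Set (ZMod p) :=
  {ξ | α * H.card ≤ ‖∑ x ∈ H, ep p (ξ * x)‖}

lemma ep_eq_pow (p : ℕ) (a : ZMod p) :
    ep p a = Complex.exp (2 * Real.pi * Complex.I / p) ^ a.val := by
  rw [ep, ← Complex.exp_nat_mul]
  ring_nf

lemma ep_root (p : ℕ) (hp : p ≠ 0) :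
    Complex.exp (2 * Real.pi * Complex.I / p) ^ p = 1 := by
  rw [← Complex.exp_nat_mul]
  have : (p : ℂ) ≠ 0 := Nat.cast_ne_zero.mpr hp
  rw [show (p : ℂ) * (2 * Real.pi * Complex.I / p) = 2 * Real.pi * Complex.I by
    field_simp]
  exact Complex.exp_two_pi_mul_I

lemma ep_add (p : ℕ) [NeZero p] (a b : ZMod p) :
    ep p (a + b) = ep p a * ep p b := by
  have hp : p ≠ 0 := NeZero.ne p
  rw [ep_eq_pow, ep_eq_pow, ep_eq_pow, ← pow_add]
  set ζ := Complex.exp (2 * Real.pi * Complex.I / p)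
  have hz : ζ ^ p = 1 := ep_root p hp
  have h : a.val + b.val = (a + b).val + p * ((a.val + b.val) / p) := by
    rw [ZMod.val_add]
    exact (Nat.mod_add_div _ _).symm
  rw [h, pow_add, pow_mul, hz, one_pow, mul_one]

lemma ep_abs (p : ℕ) (a : ZMod p) : ‖ep p a‖ = 1 := by
  rw [ep, show 2 * Real.pi * Complex.I * (a.val : ℂ) / (p : ℂ)
      = ((2 * Real.pi * a.val / p : ℝ) : ℂ) * Complex.I by push_cast; ring]
  exact Complex.norm_exp_ofReal_mul_I _

lemma ep_zero (p : ℕ) : ep p 0 = 1 := by simp [ep]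

lemma ep_ne_zero (p : ℕ) (a : ZMod p) : ep p a ≠ 0 := Complex.exp_ne_zero _

lemma ep_conj (p : ℕ) [NeZero p] (a : ZMod p) :
    (starRingEnd ℂ) (ep p a) = ep p (-a) := by
  have h1 : ep p (-a) * ep p a = 1 := by
    rw [← ep_add, neg_add_cancel, ep_zero]
  have h2 : (starRingEnd ℂ) (ep p a) * ep p a = 1 := by
    rw [mul_comm, Complex.mul_conj, ← Complex.sq_norm, ep_abs]
    norm_num
  exact mul_left_injective₀ (ep_ne_zero p a) (h2.trans h1.symm)

theorem stmt_9 (p : ℕ) (hp : p.Prime) (H : Finset (ZMod p)) (hH : H.Nonempty)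
    (α : ℝ) (hα₀ : 0 < α) (hα₁ : α < 1) (B : Finset (ZMod p))
    (hB : ↑B ⊆ Spec p α H) :
    α ^ 2 / 2 * (B.card : ℝ) ^ 2 ≤
      ({q : ZMod p × ZMod p | q.1 ∈ B ∧ q.2 ∈ B ∧
        q.1 - q.2 ∈ Spec p (α ^ 2 / 2) H}.ncard : ℝ) := by
  classical
  haveI : NeZero p := ⟨hp.pos.ne'⟩
  set S : ZMod p → ℂ := fun ξ => ∑ x ∈ H, ep p (ξ * x) with hSdef
  set c : ZMod p → ℂ := fun ξ => (starRingEnd ℂ) (S ξ) / (‖S ξ‖ : ℂ)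
    with hcdef
  have hHc : (0:ℝ) < H.card := Nat.cast_pos.mpr hH.card_pos
  have hspec : ∀ ξ ∈ B, α * H.card ≤ ‖S ξ‖ := fun ξ hξ => hB hξ
  have hSpos : ∀ ξ ∈ B, 0 < ‖S ξ‖ := fun ξ hξ =>
    lt_of_lt_of_le (by positivity) (hspec ξ hξ)
  have hSne : ∀ ξ ∈ B, S ξ ≠ 0 := fun ξ hξ => by
    intro h; simpa [h] using (hSpos ξ hξ)
  have hcS : ∀ ξ ∈ B, c ξ * S ξ = (‖S ξ‖ : ℂ) := by
    intro ξ hξ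
    have h0 : (‖S ξ‖ : ℂ) ≠ 0 := by
      exact_mod_cast (hSpos ξ hξ).ne'
    field_simp [hcdef]
    rw [hcdef]; dsimp only
    rw [div_mul_eq_mul_div, Complex.conj_mul', div_eq_iff h0]
    ring
  have hcabs : ∀ ξ ∈ B, ‖c ξ‖ = 1 := by
    intro ξ hξ
    have h0 : ‖S ξ‖ ≠ 0 := (hSpos ξ hξ).ne'
    simp [hcdef, norm_div, Complex.norm_conj, Complex.norm_real,
      abs_of_nonneg (norm_nonneg _), div_self h0]
  -- the absolute-value bound |S ξ| ≤ |H|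
  have hSle : ∀ ξ : ZMod p, ‖S ξ‖ ≤ H.card := by
    intro ξ
    calc ‖S ξ‖ ≤ ∑ x ∈ H, ‖ep p (ξ * x)‖ :=
          norm_sum_le _ _
      _ = H.card := by simp [ep_abs]
  set T : ℝ := ∑ ξ ∈ B, ‖S ξ‖ with hTdef
  have hT0 : 0 ≤ T := Finset.sum_nonneg fun ξ _ => norm_nonneg _
  have hT1 : α * B.card * H.card ≤ T := by
    rw [hTdef]
    calc α * B.card * H.card = ∑ _ξ ∈ B, α * H.card := by
          rw [Finset.sum_const, nsmul_eq_mul]; ring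
      _ ≤ ∑ ξ ∈ B, ‖S ξ‖ := Finset.sum_le_sum hspec
  set F : ZMod p → ℂ := fun x => ∑ ξ ∈ B, c ξ * ep p (ξ * x) with hFdef
  have hT2 : (T : ℂ) = ∑ x ∈ H, F x := by
    rw [hTdef]
    push_cast
    rw [Finset.sum_comm (s := H) (t := B) (f := fun x ξ => c ξ * ep p (ξ * x))]
    refine Finset.sum_congr rfl fun ξ hξ => ?_
    rw [← hcS ξ hξ, hSdef]
    simp [Finset.mul_sum]
  have hT3 : T ≤ ∑ x ∈ H, ‖F x‖ := by
    calc T = ‖(T : ℂ)‖ := by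
          rw [Complex.norm_of_nonneg hT0]
      _ = ‖∑ x ∈ H, F x‖ := by rw [hT2]
      _ ≤ ∑ x ∈ H, ‖F x‖ := norm_sum_le _ _
  have hCS : (∑ x ∈ H, ‖F x‖) ^ 2 ≤
      H.card * ∑ x ∈ H, ‖F x‖ ^ 2 :=
    sq_sum_le_card_mul_sum_sq
  -- expand the square sum
  have hQ : ∑ x ∈ H, ‖F x‖ ^ 2 ≤
      ∑ q ∈ B ×ˢ B, ‖S (q.1 - q.2)‖ := by
    have hexp : (∑ x ∈ H, (‖F x‖ ^ 2 : ℂ)) =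
        ∑ q ∈ B ×ˢ B, c q.1 * (starRingEnd ℂ) (c q.2) * S (q.1 - q.2) := by
      rw [Finset.sum_product]
      have h1 : ∀ x, (‖F x‖ ^ 2 : ℂ) = F x * (starRingEnd ℂ) (F x) := by
        intro x
        rw [Complex.mul_conj, Complex.normSq_eq_norm_sq]
        push_cast; ring
      simp_rw [h1, hFdef, map_sum, map_mul, Finset.sum_mul_sum, ep_conj]
      rw [Finset.sum_comm (s := H) (t := B)]
      refine Finset.sum_congr rfl fun ξ _ => ?_
      rw [Finset.sum_comm (s := H) (t := B)]
      refine Finset.sum_congr rfl fun η _ => ?_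
      rw [hSdef]
      simp only [Finset.mul_sum]
      refine Finset.sum_congr rfl fun x _ => ?_
      rw [show (ξ - η) * x = ξ * x + -(η * x) by ring, ep_add]
      ring
    have : (∑ x ∈ H, ‖F x‖ ^ 2) =
        (∑ q ∈ B ×ˢ B, c q.1 * (starRingEnd ℂ) (c q.2) * S (q.1 - q.2)).re := by
      rw [← hexp]
      simp [← Complex.ofReal_pow, ← Complex.ofReal_sum]
    rw [this]
    calc (∑ q ∈ B ×ˢ B, c q.1 * (starRingEnd ℂ) (c q.2) * S (q.1 - q.2)).re
        ≤ ‖∑ q ∈ B ×ˢ B, c q.1 * (starRingEnd ℂ) (c q.2) * S (q.1 - q.2)‖ :=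
          Complex.re_le_norm _
      _ ≤ ∑ q ∈ B ×ˢ B, ‖c q.1 * (starRingEnd ℂ) (c q.2) * S (q.1 - q.2)‖ :=
          norm_sum_le _ _
      _ ≤ ∑ q ∈ B ×ˢ B, ‖S (q.1 - q.2)‖ := by
          refine Finset.sum_le_sum fun q hq => ?_
          rw [Finset.mem_product] at hq
          rw [norm_mul, norm_mul, Complex.norm_conj, hcabs _ hq.1, hcabs _ hq.2]
          ring_nf
          exact le_refl _
  -- split into good and bad pairs
  set G := (B ×ˢ B).filter (fun q => q.1 - q.2 ∈ Spec p (α ^ 2 / 2) H) with hGdef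
  have hsplit : ∑ q ∈ B ×ˢ B, ‖S (q.1 - q.2)‖ ≤
      G.card * H.card + B.card ^ 2 * (α ^ 2 / 2 * H.card) := by
    rw [← Finset.sum_filter_add_sum_filter_not (B ×ˢ B)
      (fun q => q.1 - q.2 ∈ Spec p (α ^ 2 / 2) H)]
    gcongr ?_ + ?_
    · calc ∑ q ∈ G, ‖S (q.1 - q.2)‖ ≤ ∑ _q ∈ G, (H.card : ℝ) :=
            Finset.sum_le_sum fun q _ => hSle _
        _ = G.card * H.card := by rw [Finset.sum_const, nsmul_eq_mul]
    · calc ∑ q ∈ (B ×ˢ B).filter (fun q => ¬ (q.1 - q.2 ∈ Spec p (α ^ 2 / 2) H)),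
            ‖S (q.1 - q.2)‖
          ≤ ∑ _q ∈ (B ×ˢ B).filter (fun q => ¬ (q.1 - q.2 ∈ Spec p (α ^ 2 / 2) H)),
            (α ^ 2 / 2 * H.card) := by
            refine Finset.sum_le_sum fun q hq => ?_
            rw [Finset.mem_filter] at hq
            exact le_of_not_ge hq.2
        _ ≤ B.card ^ 2 * (α ^ 2 / 2 * H.card) := by
            rw [Finset.sum_const, nsmul_eq_mul]
            have h1 : ((B ×ˢ B).filter
                (fun q => ¬ (q.1 - q.2 ∈ Spec p (α ^ 2 / 2) H))).card ≤ B.card ^ 2 := by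
              calc _ ≤ (B ×ˢ B).card := Finset.card_filter_le _ _
                _ = B.card ^ 2 := by rw [Finset.card_product, sq]
            have h2 : (0:ℝ) ≤ α ^ 2 / 2 * H.card := by positivity
            exact mul_le_mul_of_nonneg_right (by exact_mod_cast h1) h2
  -- identify ncard with G.card
  have hN : ({q : ZMod p × ZMod p | q.1 ∈ B ∧ q.2 ∈ B ∧
      q.1 - q.2 ∈ Spec p (α ^ 2 / 2) H}.ncard : ℝ) = G.card := by
    have hset : {q : ZMod p × ZMod p | q.1 ∈ B ∧ q.2 ∈ B ∧
        q.1 - q.2 ∈ Spec p (α ^ 2 / 2) H} = ↑G := by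
      ext ⟨x, y⟩
      simp [hGdef, Finset.mem_filter, Finset.mem_product, and_assoc]
    rw [hset, Set.ncard_coe_finset]
  rw [hN]
  -- final arithmetic
  have key : (α * B.card * H.card) ^ 2 ≤
      H.card * (G.card * H.card + B.card ^ 2 * (α ^ 2 / 2 * H.card)) := by
    have h1 : (α * B.card * H.card) ^ 2 ≤ T ^ 2 := by
      have := mul_nonneg (mul_nonneg hα₀.le (Nat.cast_nonneg B.card)) hHc.le
      exact pow_le_pow_left₀ this hT1 2
    have h2 : T ^ 2 ≤ (∑ x ∈ H, ‖F x‖) ^ 2 := by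
      exact pow_le_pow_left₀ hT0 hT3 2
    have h3 : H.card * (∑ x ∈ H, ‖F x‖ ^ 2) ≤
        H.card * (G.card * H.card + B.card ^ 2 * (α ^ 2 / 2 * H.card)) := by
      exact mul_le_mul_of_nonneg_left (hQ.trans hsplit) hHc.le
    linarith
  have hM2 : (0:ℝ) < (H.card : ℝ) ^ 2 := by positivity
  have h4 : α ^ 2 / 2 * (B.card : ℝ) ^ 2 * (H.card : ℝ) ^ 2 ≤
      (G.card : ℝ) * (H.card : ℝ) ^ 2 := by nlinarith [key]
  exact le_of_mul_le_mul_right h4 hM2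
end

section
/- Let A ⊆ F_p be finite and suppose (A−A)/(A−A) = F_p. Then |2A² − 2A²| ≥ (1/2)·min(|A|², p). -/
open Finset
open scoped Pointwise

theorem stmt_19 (p : ℕ) [Fact p.Prime] (A : Finset (ZMod p))
    (h : ∀ ξ : ZMod p, ξ = 0 ∨ ∃ a₁ ∈ A, ∃ a₂ ∈ A, ∃ a₃ ∈ A, ∃ a₄ ∈ A,
        a₂ ≠ a₄ ∧ ξ = (a₁ - a₃) / (a₂ - a₄)) :
    (1 / 2 : ℝ) * min ((A.card : ℝ) ^ 2) (p : ℝ) ≤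
      (((A * A + A * A) - (A * A + A * A)).card : ℝ) := by
  classical
  -- every ξ (including 0) has a representation
  have h' : ∀ ξ : ZMod p, ∃ a₁ ∈ A, ∃ a₂ ∈ A, ∃ a₃ ∈ A, ∃ a₄ ∈ A,
      a₂ ≠ a₄ ∧ ξ = (a₁ - a₃) / (a₂ - a₄) := by
    intro ξ
    rcases h ξ with h0 | hr
    · rcases h 1 with h1 | ⟨b₁, hb₁, b₂, hb₂, b₃, hb₃, b₄, hb₄, hne, _⟩
      · exact absurd h1 one_ne_zero
      · exact ⟨b₂, hb₂, b₂, hb₂, b₂, hb₂, b₄, hb₄, hne, by simp [h0]⟩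
    · exact hr
  set P : Finset (ZMod p × ZMod p) := A ×ˢ A with hP
  set φ : ZMod p → ZMod p × ZMod p → ZMod p := fun ξ q => q.1 + ξ * q.2 with hφ
  set S : ZMod p → Finset (ZMod p) := fun ξ => P.image (φ ξ) with hS
  set E : ZMod p → ℕ := fun ξ =>
    ((P ×ˢ P).filter (fun q => φ ξ q.1 = φ ξ q.2)).card with hE
  -- Step A: Cauchy-Schwarz
  have stepA : ∀ ξ : ZMod p, A.card ^ 4 ≤ (S ξ).card * E ξ := by
    intro ξ
    have hmem : ∀ q ∈ P, φ ξ q ∈ S ξ := fun q hq => mem_image_of_mem _ hq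
    have hcardP : P.card = ∑ s ∈ S ξ, (P.filter (fun q => φ ξ q = s)).card :=
      card_eq_sum_card_fiberwise hmem
    have hEeq : E ξ = ∑ s ∈ S ξ, (P.filter (fun q => φ ξ q = s)).card ^ 2 := by
      have hbU : (P ×ˢ P).filter (fun q => φ ξ q.1 = φ ξ q.2) =
          (S ξ).biUnion (fun s =>
            (P.filter (fun q => φ ξ q = s)) ×ˢ (P.filter (fun q => φ ξ q = s))) := by
        ext ⟨q₁, q₂⟩
        simp only [mem_filter, mem_product, mem_biUnion]
        constructor
        · rintro ⟨⟨h1, h2⟩, he⟩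
          exact ⟨φ ξ q₁, hmem _ h1, ⟨h1, rfl⟩, ⟨h2, he.symm⟩⟩
        · rintro ⟨s, _, ⟨h1, e1⟩, ⟨h2, e2⟩⟩
          exact ⟨⟨h1, h2⟩, e1.trans e2.symm⟩
      have hdisj : ∀ x ∈ S ξ, ∀ y ∈ S ξ, x ≠ y →
          Disjoint ((P.filter (fun q => φ ξ q = x)) ×ˢ (P.filter (fun q => φ ξ q = x)))
            ((P.filter (fun q => φ ξ q = y)) ×ˢ (P.filter (fun q => φ ξ q = y))) := by
        intro x _ y _ hxy
        refine disjoint_left.2 ?_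
        rintro ⟨q₁, q₂⟩ ha hb
        simp only [mem_product, mem_filter] at ha hb
        exact hxy (ha.1.2 ▸ hb.1.2 ▸ rfl)
      simp only [hE]
      rw [hbU, card_biUnion hdisj]
      refine Finset.sum_congr rfl fun s _ => ?_
      rw [card_product, sq]
    have hCS : ((P.card : ℤ)) ^ 2 ≤ (S ξ).card * E ξ := by
      rw [hcardP, hEeq]
      push_cast
      exact sq_sum_le_card_mul_sum_sq
    have hPcard : P.card = A.card ^ 2 := by rw [hP, card_product, sq]
    have := hCS
    rw [hPcard] at this
    have h4 : ((A.card : ℤ)) ^ 4 ≤ (S ξ).card * E ξ := by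
      calc ((A.card : ℤ)) ^ 4 = ((A.card ^ 2 : ℕ) : ℤ) ^ 2 := by push_cast; ring
        _ ≤ _ := this
    exact_mod_cast h4
  -- Step B: sum of energies
  have stepB : ∑ ξ : ZMod p, E ξ ≤ A.card ^ 2 * p + A.card ^ 4 := by
    have hswap : ∑ ξ : ZMod p, E ξ =
        ∑ q ∈ P ×ˢ P, (Finset.univ.filter (fun ξ : ZMod p => φ ξ q.1 = φ ξ q.2)).card := by
      simp_rw [hE, card_filter]
      rw [Finset.sum_comm]
    rw [hswap]
    have hbound : ∀ q ∈ P ×ˢ P,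
        (Finset.univ.filter (fun ξ : ZMod p => φ ξ q.1 = φ ξ q.2)).card ≤
          if q.1 = q.2 then p else 1 := by
      rintro ⟨q₁, q₂⟩ _
      by_cases hq : q₁ = q₂
      · simp only [hq, if_true]
        calc _ ≤ (Finset.univ : Finset (ZMod p)).card := card_filter_le _ _
          _ = p := ZMod.card p
      · simp only [hq, if_false]
        by_cases hb : q₁.2 = q₂.2
        · have : (Finset.univ.filter (fun ξ : ZMod p => φ ξ q₁ = φ ξ q₂)) = ∅ := by
            refine Finset.eq_empty_of_forall_notMem ?_
            intro ξ hξ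
            simp only [mem_filter, hφ] at hξ
            apply hq
            have := hξ.2
            rw [hb] at this
            have h1 : q₁.1 = q₂.1 := by
              have := add_right_cancel this
              exact this
            exact Prod.ext h1 hb
          rw [this]; simp
        · refine Finset.card_le_one.2 ?_
          intro ξ hξ ζ hζ
          simp only [mem_filter, hφ] at hξ hζ
          have hd : q₁.2 - q₂.2 ≠ 0 := sub_ne_zero.2 hb
          have e1 : ξ * (q₁.2 - q₂.2) = q₂.1 - q₁.1 := by
            have := hξ.2; ring_nf; ring_nf at this; linear_combination this
          have e2 : ζ * (q₁.2 - q₂.2) = q₂.1 - q₁.1 := by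
            have := hζ.2; ring_nf; ring_nf at this; linear_combination this
          have := e1.trans e2.symm
          exact mul_right_cancel₀ hd this
    calc ∑ q ∈ P ×ˢ P, (Finset.univ.filter (fun ξ : ZMod p => φ ξ q.1 = φ ξ q.2)).card
        ≤ ∑ q ∈ P ×ˢ P, (if q.1 = q.2 then p else 1) := Finset.sum_le_sum hbound
      _ ≤ A.card ^ 2 * p + A.card ^ 4 := by
          rw [Finset.sum_ite]
          simp only [Finset.sum_const, smul_eq_mul, mul_one]
          have hdiag : ((P ×ˢ P).filter (fun q => q.1 = q.2)).card ≤ A.card ^ 2 := by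
            have : ((P ×ˢ P).filter (fun q => q.1 = q.2)).card ≤ P.card := by
              apply Finset.card_le_card_of_injOn (fun q => q.1)
              · intro q hq
                simp only [mem_coe, mem_filter, mem_product] at hq
                exact hq.1.1
              · intro q hq r hr he
                simp only [coe_filter, Set.mem_setOf_eq, mem_product] at hq hr
                exact Prod.ext he (hq.2 ▸ hr.2 ▸ he)
            rwa [hP, card_product, ← sq] at this
          have hoff : ((P ×ˢ P).filter (fun q => ¬ q.1 = q.2)).card ≤ A.card ^ 4 := by
            calc _ ≤ (P ×ˢ P).card := card_filter_le _ _
              _ = A.card ^ 4 := by rw [card_product, hP, card_product]; ring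
          exact Nat.add_le_add (Nat.mul_le_mul_right p hdiag) hoff
  -- Step C: choose ξ with small energy
  obtain ⟨ξ, -, hmin⟩ := Finset.exists_min_image (Finset.univ : Finset (ZMod p)) E
    ⟨0, mem_univ 0⟩
  have hpE : p * E ξ ≤ A.card ^ 2 * p + A.card ^ 4 := by
    calc p * E ξ = ∑ _ζ : ZMod p, E ξ := by
          rw [Finset.sum_const, smul_eq_mul, Finset.card_univ, ZMod.card]
      _ ≤ ∑ ζ : ZMod p, E ζ := Finset.sum_le_sum (fun ζ hζ => hmin ζ hζ)
      _ ≤ _ := stepB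
  -- Step E: embed S ξ into the target set
  obtain ⟨a₁, ha₁, a₂, ha₂, a₃, ha₃, a₄, ha₄, hne, hξ⟩ := h' ξ
  have hd : a₂ - a₄ ≠ 0 := sub_ne_zero.2 hne
  have hembed : (S ξ).card ≤ ((A * A + A * A) - (A * A + A * A)).card := by
    apply Finset.card_le_card_of_injOn (fun x => (a₂ - a₄) * x)
    · intro x hx
      simp only [hS, mem_coe, mem_image] at hx
      obtain ⟨q, hq, rfl⟩ := hx
      rw [hP, mem_product] at hq
      have key : (a₂ - a₄) * φ ξ q = (q.1 * a₂ + a₁ * q.2) - (q.1 * a₄ + a₃ * q.2) := by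
        simp only [hφ, hξ]
        field_simp
        ring
      show (a₂ - a₄) * φ ξ q ∈ _
      rw [key]
      exact Finset.sub_mem_sub
        (Finset.add_mem_add (Finset.mul_mem_mul hq.1 ha₂) (Finset.mul_mem_mul ha₁ hq.2))
        (Finset.add_mem_add (Finset.mul_mem_mul hq.1 ha₄) (Finset.mul_mem_mul ha₃ hq.2))
    · intro x _ y _ he
      exact mul_left_cancel₀ hd he
  -- combine
  have hA2 : 2 ≤ A.card := by
    have := Finset.one_lt_card.2 ⟨a₂, ha₂, a₄, ha₄, hne⟩
    omega
  have hp2 : 2 ≤ p := (Fact.out : p.Prime).two_le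
  have key : (p : ℝ) * (A.card : ℝ) ^ 4 ≤
      ((S ξ).card : ℝ) * ((A.card : ℝ) ^ 2 * p + (A.card : ℝ) ^ 4) := by
    have h1 : p * A.card ^ 4 ≤ (S ξ).card * (A.card ^ 2 * p + A.card ^ 4) := by
      calc p * A.card ^ 4 ≤ p * ((S ξ).card * E ξ) := Nat.mul_le_mul_left p (stepA ξ)
        _ = (S ξ).card * (p * E ξ) := by ring
        _ ≤ (S ξ).card * (A.card ^ 2 * p + A.card ^ 4) :=
            Nat.mul_le_mul_left _ hpE
    exact_mod_cast h1
  set n : ℝ := (A.card : ℝ) with hn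
  have hnpos : (0:ℝ) < n := by
    rw [hn]; exact_mod_cast Nat.lt_of_lt_of_le Nat.zero_lt_two hA2
  have hppos : (0:ℝ) < p := by exact_mod_cast Nat.lt_of_lt_of_le Nat.zero_lt_two hp2
  have hs : ((S ξ).card : ℝ) ≤ (((A * A + A * A) - (A * A + A * A)).card : ℝ) := by
    exact_mod_cast hembed
  have hs0 : (0:ℝ) ≤ ((S ξ).card : ℝ) := Nat.cast_nonneg _
  have hmin2 : min (n ^ 2) (p : ℝ) ≤ 2 * ((S ξ).card : ℝ) := by
    set s : ℝ := ((S ξ).card : ℝ) with hsdef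
    rcases le_total (n ^ 2) (p : ℝ) with hc | hc
    · rw [min_eq_left hc]
      have h1 : n ^ 2 * p + n ^ 4 ≤ 2 * (n ^ 2 * p) := by nlinarith [sq_nonneg n]
      have h3 : n ^ 2 * (n ^ 2 * p) ≤ (2 * s) * (n ^ 2 * p) := by
        calc n ^ 2 * (n ^ 2 * p) = p * n ^ 4 := by ring
          _ ≤ s * (n ^ 2 * p + n ^ 4) := key
          _ ≤ s * (2 * (n ^ 2 * p)) := mul_le_mul_of_nonneg_left h1 hs0
          _ = (2 * s) * (n ^ 2 * p) := by ring
      exact le_of_mul_le_mul_right h3 (mul_pos (pow_pos hnpos 2) hppos)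
    · rw [min_eq_right hc]
      have h1 : n ^ 2 * p + n ^ 4 ≤ 2 * n ^ 4 := by nlinarith [sq_nonneg n]
      have h3 : (p : ℝ) * n ^ 4 ≤ (2 * s) * n ^ 4 := by
        calc (p : ℝ) * n ^ 4 ≤ s * (n ^ 2 * p + n ^ 4) := key
          _ ≤ s * (2 * n ^ 4) := mul_le_mul_of_nonneg_left h1 hs0
          _ = (2 * s) * n ^ 4 := by ring
      exact le_of_mul_le_mul_right h3 (pow_pos hnpos 4)
  calc (1 / 2 : ℝ) * min ((A.card : ℝ) ^ 2) (p : ℝ) ≤ ((S ξ).card : ℝ) := by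
        rw [← hn] at *; linarith
    _ ≤ _ := hs
end
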